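/- arXiv:1106.3120 — 7 statements merged into one kernel-verified Lean document; each statement's English description precedes it below -/
import Mathlib

section
/- Let a, b ≥ 1, n = a + b, and q ∈ ℂ with q ≠ 0. Let X_q ∈ End(ℂ^n) be defined by X_q e_k = e_{k+1} (k < n), X_q e_n = q e_1, and for each n-th root ζ of q set f_ζ = (1/n)Σ_{k=1}^n ζ^{1−k} e_k. For each a-element set ζ = {ζ_1,…,ζ_a} of n-th roots of q put F_ζ := (∏_{1≤i<j≤a}(ζ_i−ζ_j))·f_{ζ_1}∧⋯∧f_{ζ_a} ∈ Λ^a ℂ^n (this is independent of the chosen ordering of ζ_1,…,ζ_a). For a partition λ = (λ_1 ≥ ⋯ ≥ λ_a ≥ 0) with λ_1 ≤ b, put e_λ := e_{λ_1+a} ∧ e_{λ_2+a−1} ∧ ⋯ ∧ e_{λ_a+1}, and let s_λ(ζ) := det(ζ_i^{λ_j+a−j})_{1≤i,j≤a} / det(ζ_i^{a−j})_{1≤i,j≤a} be the Schur polynomial evaluated at ζ (well defined since the ζ_i are distinct). Then e_λ = Σ_ζ s_λ(ζ)·F_ζ, the sum running over all a-element subsets ζ of the set of n-th roots of q. -/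
/-- The `m`-th standard basis vector of `ℂ^n` (0-indexed: `stdv n (k-1)` is `e_k`). -/
noncomputable def stdv (n m : ℕ) : Fin n → ℂ := fun j => if (j : ℕ) = m then 1 else 0

/-- The wedge product `v 0 ∧ ⋯ ∧ v (a-1)` as an element of the `a`-th exterior power
`Λ^a ℂ^n`, realized as a submodule of the exterior algebra. -/
noncomputable def wedge (n a : ℕ) (v : Fin a → (Fin n → ℂ)) : ⋀[ℂ]^a (Fin n → ℂ) :=
  ⟨ExteriorAlgebra.ιMulti ℂ a v, ExteriorAlgebra.ιMulti_range ℂ a (Set.mem_range_self v)⟩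

/-- The eigenvector `f_ζ = (1/n) Σ_{k=1}^n ζ^{1-k} e_k` of the type A cyclic element. -/
noncomputable def cyclicEigvec (n : ℕ) (ζ : ℂ) : Fin n → ℂ :=
  fun k => (1 / (n : ℂ)) * ζ ^ (1 - ((k : ℕ) + 1 : ℤ))

open Finset in
lemma rootSum (n : ℕ) (hn : n ≠ 0) (q : ℂ) (hq : q ≠ 0) (R : Finset ℂ)
    (hRcard : R.card = n) (hR : ∀ ζ ∈ R, ζ ^ n = q) (d : ℤ) (hd1 : -(n:ℤ) < d) (hd2 : d < n) :
    ∑ ζ ∈ R, ζ ^ d = if d = 0 then (n : ℂ) else 0 := by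
  have hω := Complex.isPrimitiveRoot_exp n hn
  set ω := Complex.exp (2 * Real.pi * Complex.I / n) with hωdef
  obtain ⟨ζ0, hζ0⟩ : R.Nonempty := Finset.card_pos.mp (by omega)
  have hα : ζ0 ^ n = q := hR ζ0 hζ0
  have hω0 : ω ≠ 0 := hω.ne_zero hn
  have hroots : R.val = (Multiset.range n).map (fun i => ω ^ i * ζ0) := by
    rw [← hω.nthRoots_eq hα]
    apply Multiset.eq_of_le_of_card_le
    · rw [Multiset.le_iff_subset R.nodup]
      intro x hx
      rw [Polynomial.mem_nthRoots (Nat.pos_of_ne_zero hn)]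
      exact hR x hx
    · rw [show Multiset.card R.val = n from hRcard, hω.nthRoots_eq hα,
        Multiset.card_map, Multiset.card_range]
  have hsum : ∑ ζ ∈ R, ζ ^ d = ∑ i ∈ Finset.range n, (ω ^ i * ζ0) ^ d := by
    rw [Finset.sum, hroots, Multiset.map_map]
    rfl
  rw [hsum]
  have hterm : ∀ i, (ω ^ i * ζ0) ^ d = (ω ^ d) ^ i * ζ0 ^ d := by
    intro i
    rw [mul_zpow, ← zpow_natCast ω i, ← zpow_mul, mul_comm (i:ℤ) d, zpow_mul, zpow_natCast]
  simp only [hterm, ← Finset.sum_mul]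
  by_cases hd : d = 0
  · simp [hd]
  · rw [if_neg hd]
    have hx1 : ω ^ d ≠ 1 := by
      rw [Ne, hω.zpow_eq_one_iff_dvd]
      intro hdvd
      rcases hdvd with ⟨c, rfl⟩
      rcases lt_trichotomy c 0 with h | h | h
      · nlinarith [Int.le_of_lt h]
      · simp [h] at hd
      · nlinarith [Int.add_one_le_iff.mpr h]
    rw [geom_sum_eq hx1]
    have hxn : (ω ^ d) ^ n = 1 := by
      rw [← zpow_natCast, ← zpow_mul, mul_comm, zpow_mul, zpow_natCast, hω.pow_eq_one, one_zpow]
    rw [hxn, sub_self, zero_div, zero_mul]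

lemma stdv_eq_sum (n : ℕ) (hn : n ≠ 0) (q : ℂ) (hq : q ≠ 0) (R : Finset ℂ)
    (hRcard : R.card = n) (hR : ∀ ζ ∈ R, ζ ^ n = q) (m : ℕ) (hm : m < n) :
    stdv n m = ∑ ζ ∈ R, (ζ ^ m) • cyclicEigvec n ζ := by
  funext k
  have hζ0 : ∀ ζ ∈ R, ζ ≠ 0 := by
    intro ζ hζ h0
    apply hq; rw [← hR ζ hζ, h0, zero_pow hn]
  have : (∑ ζ ∈ R, (ζ ^ m) • cyclicEigvec n ζ) k
      = (1 / (n:ℂ)) * ∑ ζ ∈ R, ζ ^ ((m : ℤ) - (k : ℕ)) := by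
    rw [Finset.sum_apply, Finset.mul_sum]
    apply Finset.sum_congr rfl
    intro ζ hζ
    have hz := hζ0 ζ hζ
    simp only [Pi.smul_apply, cyclicEigvec, smul_eq_mul]
    rw [show (1 - ((k:ℕ) + 1 : ℤ)) = -(k:ℕ) by ring, ← zpow_natCast ζ m,
      mul_left_comm, ← zpow_add₀ hz, ← sub_eq_add_neg]
  rw [this, rootSum n hn q hq R hRcard hR _ (by omega) (by omega)]
  simp only [stdv, sub_eq_zero]
  by_cases hkm : (k : ℕ) = m
  · rw [if_pos hkm, if_pos (by exact_mod_cast hkm.symm), mul_comm, mul_one_div]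
    rw [div_self (by exact_mod_cast hn : (n:ℂ) ≠ 0)]
  · rw [if_neg hkm, if_neg (by exact_mod_cast fun h => hkm (by exact_mod_cast h.symm)), mul_zero]

lemma det_rev_vandermonde (a : ℕ) (v : Fin a → ℂ) :
    Matrix.det (Matrix.of fun i j : Fin a => v i ^ (a - 1 - (j : ℕ)))
      = ∏ i : Fin a, ∏ j ∈ Finset.Ioi i, (v i - v j) := by
  have key : (Matrix.of fun i j : Fin a => v i ^ (a - 1 - (j : ℕ)))
      = (Matrix.vandermonde (v ∘ Fin.rev)).submatrix Fin.revPerm Fin.revPerm := by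
    ext i j
    simp only [Matrix.submatrix_apply, Matrix.vandermonde, Matrix.of_apply, Function.comp,
      Fin.revPerm_apply, Fin.rev_rev]
    congr 1
    rw [Fin.val_rev]
    omega
  rw [key, Matrix.det_submatrix_equiv_self, Matrix.det_vandermonde]
  rw [Finset.prod_sigma', Finset.prod_sigma']
  apply Finset.prod_nbij' (fun p => ⟨Fin.rev p.2, Fin.rev p.1⟩)
    (fun p => ⟨Fin.rev p.2, Fin.rev p.1⟩)
  · rintro ⟨i, j⟩ h
    simp only [Finset.mem_sigma, Finset.mem_univ, Finset.mem_Ioi, true_and] at h ⊢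
    exact Fin.rev_lt_rev.mpr h
  · rintro ⟨i, j⟩ h
    simp only [Finset.mem_sigma, Finset.mem_univ, Finset.mem_Ioi, true_and] at h ⊢
    exact Fin.rev_lt_rev.mpr h
  · rintro ⟨i, j⟩ _; simp [Fin.rev_rev]
  · rintro ⟨i, j⟩ _; simp [Fin.rev_rev]
  · rintro ⟨i, j⟩ _
    simp [Fin.rev_rev]


/-- Satake identification for the Grassmannian `G(a,b)`, `n = a+b`, `q ≠ 0`.
For each `a`-element subset `S` of the set `R` of `n`-th roots of `q` (enumerated, in any
order, by `ord S : Fin a → ℂ`), set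
`F_S = (∏_{i<j} (ζ_i - ζ_j)) · f_{ζ_1} ∧ ⋯ ∧ f_{ζ_a}` where `ζ_i = ord S i`.  Then for every
partition `λ ⊆ a×b`, with `e_λ = e_{λ_1+a} ∧ e_{λ_2+a-1} ∧ ⋯ ∧ e_{λ_a+1}` and `s_λ(ζ)` the
Schur bialternant `det(ζ_i^{λ_j+a-j})/det(ζ_i^{a-j})`, one has `e_λ = Σ_S s_λ(S) · F_S`. -/
theorem statement1 (a b n : ℕ) (ha : 1 ≤ a) (hb : 1 ≤ b) (hn : n = a + b)
    (q : ℂ) (hq : q ≠ 0)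
    (R : Finset ℂ) (hRcard : R.card = n) (hR : ∀ ζ ∈ R, ζ ^ n = q)
    (ord : Finset ℂ → (Fin a → ℂ))
    (hord : ∀ S ∈ R.powersetCard a,
      Function.Injective (ord S) ∧ ∀ i : Fin a, ord S i ∈ S)
    (lam : Fin a → ℕ) (hlam : ∀ i j : Fin a, i ≤ j → lam j ≤ lam i)
    (hlamb : ∀ i : Fin a, lam i ≤ b) :
    wedge n a (fun i : Fin a => stdv n (lam i + (a - 1 - (i : ℕ))))
      = ∑ S ∈ R.powersetCard a,
          ((Matrix.det (Matrix.of fun i j : Fin a => ord S i ^ (lam j + (a - 1 - (j : ℕ)))) /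
            Matrix.det (Matrix.of fun i j : Fin a => ord S i ^ (a - 1 - (j : ℕ)))) *
           (∏ i : Fin a, ∏ j ∈ Finset.Ioi i, (ord S i - ord S j))) •
          wedge n a (fun i : Fin a => cyclicEigvec n (ord S i)) := by
  classical
  have hn0 : n ≠ 0 := by omega
  set μ : Fin a → ℕ := fun i => lam i + (a - 1 - (i : ℕ)) with hμ
  set f : ℂ → (Fin n → ℂ) := cyclicEigvec n with hf
  set ι : AlternatingMap ℂ (Fin n → ℂ) (ExteriorAlgebra ℂ (Fin n → ℂ)) (Fin a) :=
    ExteriorAlgebra.ιMulti ℂ a with hι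
  -- basic facts about ord S
  have hordS : ∀ S ∈ R.powersetCard a, Function.Injective (ord S) ∧ (∀ i, ord S i ∈ S) ∧
      Finset.image (ord S) Finset.univ = S := by
    intro S hS
    obtain ⟨hinj, hmem⟩ := hord S hS
    obtain ⟨hSR, hScard⟩ := Finset.mem_powersetCard.mp hS
    refine ⟨hinj, hmem, Finset.eq_of_subset_of_card_le ?_ ?_⟩
    · intro x hx
      obtain ⟨i, _, rfl⟩ := Finset.mem_image.mp hx
      exact hmem i
    · rw [Finset.card_image_of_injective _ hinj, Finset.card_univ, Fintype.card_fin, hScard]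
  -- coefficient simplification
  have hcoeff : ∀ S ∈ R.powersetCard a,
      ((Matrix.det (Matrix.of fun i j : Fin a => ord S i ^ (lam j + (a - 1 - (j : ℕ)))) /
        Matrix.det (Matrix.of fun i j : Fin a => ord S i ^ (a - 1 - (j : ℕ)))) *
       (∏ i : Fin a, ∏ j ∈ Finset.Ioi i, (ord S i - ord S j)))
      = Matrix.det (Matrix.of fun i j : Fin a => ord S i ^ μ j) := by
    intro S hS
    rw [← det_rev_vandermonde a (ord S)]
    apply div_mul_cancel₀
    rw [det_rev_vandermonde]
    apply Finset.prod_ne_zero_iff.mpr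
    intro i _
    apply Finset.prod_ne_zero_iff.mpr
    intro j hj h0
    exact absurd ((hordS S hS).1 (sub_eq_zero.mp h0)) (Finset.mem_Ioi.mp hj).ne
  rw [Finset.sum_congr rfl (fun S hS => by rw [hcoeff S hS])]
  -- pass to the exterior algebra
  apply Subtype.ext
  rw [AddSubmonoidClass.coe_finset_sum]
  simp only [SetLike.val_smul, wedge]
  -- expand the standard vectors in the eigenbasis
  have hexp : (fun i : Fin a => stdv n (μ i)) = fun i => ∑ ζ ∈ R, (ζ ^ μ i) • f ζ := by
    funext i
    exact stdv_eq_sum n hn0 q hq R hRcard hR (μ i) (by have := hlamb i; simp only [hμ]; omega)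
  rw [hexp]
  have hexpand : ι (fun i => ∑ ζ ∈ R, (ζ ^ μ i) • f ζ)
      = ∑ r ∈ Fintype.piFinset (fun _ : Fin a => R), ι (fun i => (r i ^ μ i) • f (r i)) :=
    ι.toMultilinearMap.map_sum_finset _ _
  have hsm : ∀ r : Fin a → ℂ, ι (fun i => (r i ^ μ i) • f (r i))
      = (∏ i, r i ^ μ i) • ι (fun i => f (r i)) := fun r =>
    ι.toMultilinearMap.map_smul_univ _ _
  rw [hexpand]
  simp only [hsm]
  rw [← Finset.sum_filter_of_ne
    (p := fun r : Fin a → ℂ => Function.Injective r) (fun r _ hne => by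
      by_contra hninj
      apply hne
      simp only [Function.Injective, not_forall] at hninj
      obtain ⟨i, j, hij, hne'⟩ := hninj
      rw [ι.map_eq_zero_of_eq (fun i => f (r i)) (show f (r i) = f (r j) by rw [hij]) hne', smul_zero])]
  -- expand each determinant as a sum over permutations
  have hdet : ∀ S ∈ R.powersetCard a,
      Matrix.det (Matrix.of fun i j : Fin a => ord S i ^ μ j) • ι (fun i => f (ord S i))
      = ∑ σ : Equiv.Perm (Fin a),
          (∏ i, ord S (σ i) ^ μ i) • ι (fun i => f (ord S (σ i))) := by
    intro S hS
    rw [Matrix.det_apply', Finset.sum_smul]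
    apply Finset.sum_congr rfl
    intro σ _
    have hperm : ι ((fun i => f (ord S i)) ∘ σ) = Equiv.Perm.sign σ • ι (fun i => f (ord S i)) :=
      ι.map_perm _ σ
    have : ι (fun i => f (ord S (σ i))) = Equiv.Perm.sign σ • ι (fun i => f (ord S i)) := hperm
    rw [this, Units.smul_def, ← Int.cast_smul_eq_zsmul ℂ, smul_smul, mul_comm]
    rfl
  rw [Finset.sum_congr rfl hdet]
  rw [← Finset.sum_product' (s := R.powersetCard a) (t := (Finset.univ : Finset (Equiv.Perm (Fin a))))]
  symm
  apply Finset.sum_bij (fun p _ => fun i => ord p.1 (p.2 i))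
  · rintro ⟨S, σ⟩ hp
    obtain ⟨hS, -⟩ := Finset.mem_product.mp hp
    obtain ⟨hinj, hmem, himg⟩ := hordS S hS
    obtain ⟨hSR, -⟩ := Finset.mem_powersetCard.mp hS
    rw [Finset.mem_filter]
    constructor
    · rw [Fintype.mem_piFinset]
      intro i
      exact hSR (hmem (σ i))
    · exact hinj.comp σ.injective
  · rintro ⟨S, σ⟩ hp ⟨T, τ⟩ hq heq
    obtain ⟨hS, -⟩ := Finset.mem_product.mp hp
    obtain ⟨hT, -⟩ := Finset.mem_product.mp hq
    obtain ⟨hinjS, hmemS, himgS⟩ := hordS S hS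
    obtain ⟨hinjT, hmemT, himgT⟩ := hordS T hT
    have hST : S = T := by
      rw [← himgS, ← himgT]
      apply Finset.Subset.antisymm
      · intro x hx
        obtain ⟨i, -, rfl⟩ := Finset.mem_image.mp hx
        have := congrFun heq (σ.symm i)
        simp only [Equiv.apply_symm_apply] at this
        rw [this]
        exact Finset.mem_image_of_mem _ (Finset.mem_univ _)
      · intro x hx
        obtain ⟨i, -, rfl⟩ := Finset.mem_image.mp hx
        have := congrFun heq (τ.symm i)
        simp only [Equiv.apply_symm_apply] at this
        rw [← this]
        exact Finset.mem_image_of_mem _ (Finset.mem_univ _)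
    subst hST
    have hστ : σ = τ := by
      ext i
      exact congrArg Fin.val (hinjS (congrFun heq i))
    rw [hστ]
  · intro r hr
    rw [Finset.mem_filter, Fintype.mem_piFinset] at hr
    obtain ⟨hrR, hrinj⟩ := hr
    set S : Finset ℂ := Finset.image r Finset.univ with hSdef
    have hS : S ∈ R.powersetCard a := by
      rw [Finset.mem_powersetCard]
      constructor
      · intro x hx
        obtain ⟨i, -, rfl⟩ := Finset.mem_image.mp hx
        exact hrR i
      · rw [Finset.card_image_of_injective _ hrinj, Finset.card_univ, Fintype.card_fin]
    obtain ⟨hinj, hmem, himg⟩ := hordS S hS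
    have hg : Function.Bijective (fun i : Fin a => (⟨ord S i, hmem i⟩ : S)) := by
      rw [Fintype.bijective_iff_injective_and_card]
      constructor
      · intro i j hij
        exact hinj (congrArg Subtype.val hij)
      · rw [Fintype.card_coe, (Finset.mem_powersetCard.mp hS).2, Fintype.card_fin]
    have hr' : Function.Bijective (fun i : Fin a =>
        (⟨r i, Finset.mem_image_of_mem _ (Finset.mem_univ i)⟩ : S)) := by
      rw [Fintype.bijective_iff_injective_and_card]
      constructor
      · intro i j hij
        exact hrinj (congrArg Subtype.val hij)
      · rw [Fintype.card_coe, (Finset.mem_powersetCard.mp hS).2, Fintype.card_fin]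
    refine ⟨⟨S, (Equiv.ofBijective _ hr').trans (Equiv.ofBijective _ hg).symm⟩,
      Finset.mem_product.mpr ⟨hS, Finset.mem_univ _⟩, ?_⟩
    funext i
    show ord S (((Equiv.ofBijective _ hg).symm) ((Equiv.ofBijective _ hr') i)) = r i
    have : (fun i : Fin a => (⟨ord S i, hmem i⟩ : S))
        (((Equiv.ofBijective _ hg).symm) ((Equiv.ofBijective _ hr') i))
        = (Equiv.ofBijective _ hr') i := (Equiv.ofBijective _ hg).apply_symm_apply _
    exact congrArg Subtype.val this
  · rintro ⟨S, σ⟩ hp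
    rfl
end

section
/- Let a, b ≥ 1, n = a + b, q ∈ ℂ. Let X_q ∈ End(ℂ^n) be defined by X_q e_k = e_{k+1} (k < n), X_q e_n = q e_1. For A ∈ End(ℂ^n) let ρ(A) ∈ End(Λ^a ℂ^n) be the derivation extension, ρ(A)(v_1∧⋯∧v_a) = Σ_{i=1}^a v_1∧⋯∧A v_i∧⋯∧v_a. For a partition λ ⊆ a×b set e_λ := e_{λ_1+a}∧e_{λ_2+a−1}∧⋯∧e_{λ_a+1}. Then for every 1 ≤ ℓ ≤ n−1 and every partition λ ⊆ a×b: ρ((X_q)^ℓ)(e_λ) = Σ_μ (−1)^{ht(μ/λ)} e_μ + q·Σ_ν (−1)^{ht(λ/ν)} e_ν, where μ runs over partitions contained in the a×b rectangle with μ ⊇ λ and μ/λ a border strip of size ℓ, and ν runs over partitions contained in the a×b rectangle with ν ⊆ λ and λ/ν a border strip of size n−ℓ. -/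
/-- `lam` is a partition contained in the `a × b` rectangle. -/
def InRect (a b : ℕ) (lam : ℕ → ℕ) : Prop :=
  (∀ i j : ℕ, i ≤ j → lam j ≤ lam i) ∧ (∀ i, lam i ≤ b) ∧ (∀ i, a ≤ i → lam i = 0)

/-- `mu/lam` is a border strip (rim hook) of size `ℓ` occupying exactly the rows
`r,…,s`; its height is `s - r`.  The condition `mu (i+1) = lam i + 1` on consecutive
occupied rows encodes connectedness together with the absence of a `2×2` square. -/
def IsBorderStripAt (a : ℕ) (lam mu : ℕ → ℕ) (ℓ r s : ℕ) : Prop :=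
  r ≤ s ∧
  (∀ i, i < r → mu i = lam i) ∧
  (∀ i, s < i → mu i = lam i) ∧
  (∀ i, r ≤ i → i ≤ s → lam i < mu i) ∧
  (∀ i, r ≤ i → i < s → mu (i + 1) = lam i + 1) ∧
  (∑ i ∈ Finset.range a, (mu i - lam i)) = ℓ

/-- The basis vector `e_λ = e_{λ_1+a} ∧ e_{λ_2+a-1} ∧ ⋯ ∧ e_{λ_a+1}` of `Λ^a ℂ^n`. -/
noncomputable def eLam (n a : ℕ) (lam : ℕ → ℕ) : ⋀[ℂ]^a (Fin n → ℂ) :=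
  wedge n a (fun i : Fin a => stdv n (lam i + (a - 1 - (i : ℕ))))

lemma wedge_eq_zero (n a : ℕ) (v : Fin a → (Fin n → ℂ)) (i j : Fin a) (hij : i ≠ j)
    (h : v i = v j) : wedge n a v = 0 := by
  apply Subtype.ext
  simpa [wedge] using (ExteriorAlgebra.ιMulti ℂ a).map_eq_zero_of_eq v h hij

lemma wedge_swap (n a : ℕ) (v : Fin a → (Fin n → ℂ)) (i j : Fin a) (hij : i ≠ j) :
    wedge n a (v ∘ Equiv.swap i j) = - wedge n a v := by
  apply Subtype.ext
  simpa [wedge] using (ExteriorAlgebra.ιMulti ℂ a).map_swap v hij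

lemma wedge_smul (n a : ℕ) (v : Fin a → (Fin n → ℂ)) (i : Fin a) (c : ℂ) (x : Fin n → ℂ) :
    wedge n a (Function.update v i (c • x)) = c • wedge n a (Function.update v i x) := by
  apply Subtype.ext
  simpa [wedge] using (ExteriorAlgebra.ιMulti ℂ a).map_update_smul v i c x

lemma wedge_slide (n a : ℕ) : ∀ (dd r s : ℕ) (_ : r + dd = s) (hs : s < a)
    (u w : Fin a → (Fin n → ℂ)),
    (∀ j : Fin a, ((j : ℕ) < r ∨ s < (j : ℕ)) → u j = w j) →
    (u ⟨s, hs⟩ = w ⟨r, by omega⟩) →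
    (∀ (j : ℕ) (h1 : r ≤ j) (h2 : j < s), u ⟨j, by omega⟩ = w ⟨j + 1, by omega⟩) →
    wedge n a u = ((-1 : ℂ) ^ dd) • wedge n a w := by
  intro dd
  induction dd with
  | zero =>
    intro r s hrs hs u w hoff hrr hmid
    have : u = w := by
      funext j
      rcases Nat.lt_trichotomy (j : ℕ) s with h | h | h
      · exact hoff j (Or.inl (by omega))
      · have : j = ⟨s, hs⟩ := by apply Fin.ext; exact h
        rw [this]; convert hrr using 2; apply Fin.ext; simp; omega
      · exact hoff j (Or.inr h)
    rw [this, pow_zero, one_smul]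
  | succ d ih =>
    intro r s hrs hs u w hoff hrr hmid
    have hs1 : s - 1 < a := by omega
    have hrs1 : r ≤ s - 1 := by omega
    set p : Fin a := ⟨s - 1, hs1⟩
    set pp : Fin a := ⟨s, hs⟩
    have hne : p ≠ pp := by
      intro h
      have := congrArg Fin.val h
      simp only [p, pp] at this
      omega
    have hswap : wedge n a (u ∘ Equiv.swap p pp) = - wedge n a u := wedge_swap n a u p pp hne
    set u' : Fin a → (Fin n → ℂ) := u ∘ Equiv.swap p pp with hu'
    have hstep : wedge n a u' = ((-1 : ℂ) ^ d) • wedge n a w := by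
      apply ih r (s - 1) (by omega) hs1 u' w
      · intro j hj
        have hjp : j ≠ p := by intro h; rw [h] at hj; simp [p] at hj; omega
        rcases Nat.lt_or_ge (j : ℕ) s with h | h
        · have hjpp : j ≠ pp := by intro hh; rw [hh] at h; simp [pp] at h
          rw [hu']
          simp only [Function.comp_apply, Equiv.swap_apply_of_ne_of_ne hjp hjpp]
          rcases hj with hj | hj
          · exact hoff j (Or.inl hj)
          · -- s - 1 < j < s impossible... j = s-1? no: j ≠ p. so s-1 < j and j < s: contradiction
            exfalso; have := j.isLt; omega
        · rcases Nat.eq_or_lt_of_le h with h | h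
          · have hj' : j = pp := by apply Fin.ext; simp only [pp]; omega
            rw [hj', hu']
            simp only [Function.comp_apply, Equiv.swap_apply_right]
            have h5 := hmid (s-1) (by omega) (by omega)
            have e1 : (⟨s-1, by omega⟩ : Fin a) = p := rfl
            have e2 : (⟨s-1+1, by omega⟩ : Fin a) = pp := by apply Fin.ext; simp only [pp]; omega
            rw [e1, e2] at h5
            exact h5
          · have hjpp : j ≠ pp := by intro hh; rw [hh] at h; simp [pp] at h
            rw [hu']
            simp only [Function.comp_apply, Equiv.swap_apply_of_ne_of_ne hjp hjpp]
            exact hoff j (Or.inr (by omega))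
      · show u' p = _
        rw [hu']
        simp only [Function.comp_apply, Equiv.swap_apply_left]
        convert hrr using 2
      · intro j h1 h2
        have hjp : (⟨j, by omega⟩ : Fin a) ≠ p := by
          intro hh; have := congrArg Fin.val hh; simp [p] at this; omega
        have hjpp : (⟨j, by omega⟩ : Fin a) ≠ pp := by
          intro hh; have := congrArg Fin.val hh; simp [pp] at this; omega
        rw [hu']
        simp only [Function.comp_apply, Equiv.swap_apply_of_ne_of_ne hjp hjpp]
        exact hmid j h1 (by omega)
    have huu : wedge n a u = - wedge n a u' := by rw [hswap, neg_neg]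
    rw [huu, hstep, pow_succ, mul_neg_one]
    exact (neg_smul _ _).symm

lemma Xq_pow (n : ℕ) (q : ℂ) (Xq : Module.End ℂ (Fin n → ℂ))
    (hXq : ∀ k : Fin n, Xq (stdv n k) =
      if (k : ℕ) + 1 < n then stdv n ((k : ℕ) + 1) else q • stdv n 0) :
    ∀ (ℓ m : ℕ), m < n → m + ℓ < 2 * n →
      (Xq ^ ℓ) (stdv n m) = if m + ℓ < n then stdv n (m + ℓ) else q • stdv n (m + ℓ - n) := by
  intro ℓ
  induction ℓ with
  | zero => intro m hm _; simp [hm]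
  | succ l ih =>
    intro m hm h2
    rw [pow_succ, Module.End.mul_apply]
    have hx := hXq ⟨m, hm⟩
    simp only [Fin.val_mk] at hx
    rw [hx]
    by_cases h1 : m + 1 < n
    · rw [if_pos h1]
      have := ih (m + 1) h1 (by omega)
      rw [this]
      have e : m + 1 + l = m + (l + 1) := by omega
      rw [e]
    · rw [if_neg h1]
      have hmn : m + 1 = n := by omega
      rw [map_smul]
      have := ih 0 (by omega) (by omega)
      rw [this]
      have hl : l < n := by omega
      rw [if_pos (by omega : 0 + l < n)]
      rw [if_neg (by omega : ¬ m + (l + 1) < n)]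
      have e : m + (l + 1) - n = 0 + l := by omega
      rw [e]

lemma telescope (p : ℕ → ℕ) (hanti : ∀ i j, i ≤ j → p j ≤ p i) (r : ℕ) :
    ∀ s, r ≤ s → (∑ j ∈ Finset.Ioc r s, (p (j - 1) + 1 - p j)) + p s = p r + (s - r) := by
  intro s
  induction s with
  | zero => intro h; interval_cases r; simp
  | succ s ih =>
    intro h
    rcases Nat.eq_or_lt_of_le h with h | h
    · rw [← h]; simp
    · have hrs : r ≤ s := by omega
      rw [Finset.sum_Ioc_succ_top hrs]
      have ihh := ih hrs
      have h1 : p (s + 1) ≤ p s := hanti s (s + 1) (by omega)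
      have h2 : p s ≤ p r := hanti r s hrs
      simp only [Nat.add_sub_cancel]
      omega

lemma sum_diff_eq (p m : ℕ → ℕ) (r s N : ℕ) (hrs : r ≤ s) (hsN : s < N)
    (hoff : ∀ j, j < r ∨ s < j → m j = p j)
    (hstep : ∀ j, r < j → j ≤ s → m j = p (j - 1) + 1)
    (hanti : ∀ i j, i ≤ j → p j ≤ p i)
    (hr : p r ≤ m r) :
    (∑ j ∈ Finset.range N, (m j - p j)) + p s = m r + (s - r) := by
  have h1 : ∑ j ∈ Finset.range N, (m j - p j) = ∑ j ∈ Finset.Icc r s, (m j - p j) := by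
    symm
    apply Finset.sum_subset
    · intro x hx
      simp only [Finset.mem_Icc] at hx
      simp only [Finset.mem_range]
      omega
    · intro x _ hx
      simp only [Finset.mem_Icc, not_and, not_le] at hx
      rw [hoff x (by omega)]
      omega
  rw [h1, ← Finset.Ioc_insert_left hrs, Finset.sum_insert (by simp)]
  have h2 : ∑ j ∈ Finset.Ioc r s, (m j - p j) = ∑ j ∈ Finset.Ioc r s, (p (j - 1) + 1 - p j) := by
    apply Finset.sum_congr rfl
    intro j hj
    simp only [Finset.mem_Ioc] at hj
    rw [hstep j hj.1 hj.2]
  rw [h2]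
  have := telescope p hanti r s hrs
  omega

lemma finsum3 {M : Type*} [AddCommMonoid M] {ι : Type*} (F : (ℕ → ℕ) → ℕ → ℕ → M)
    (S : Finset ι) (g : ι → ((ℕ → ℕ) × ℕ × ℕ))
    (hinj : Set.InjOn g S)
    (hsupp : ∀ m r s, F m r s ≠ 0 → ∃ i ∈ S, g i = (m, r, s)) :
    (∑ᶠ (m : ℕ → ℕ), ∑ᶠ (r : ℕ), ∑ᶠ (s : ℕ), F m r s)
      = ∑ i ∈ S, F (g i).1 (g i).2.1 (g i).2.2 := by
  classical
  set Sm : Finset (ℕ → ℕ) := S.image (fun i => (g i).1) with hSm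
  set Sr : Finset ℕ := S.image (fun i => (g i).2.1) with hSr
  set Ss : Finset ℕ := S.image (fun i => (g i).2.2) with hSs
  have step1 : ∀ m r, (∑ᶠ (s : ℕ), F m r s) = ∑ s ∈ Ss, F m r s := by
    intro m r
    apply finsum_eq_finset_sum_of_support_subset
    intro s hs
    obtain ⟨i, hi, hgi⟩ := hsupp m r s hs
    simp only [hSs, Finset.coe_image, Set.mem_image, Finset.mem_coe]
    exact ⟨i, hi, by rw [hgi]⟩
  have step2 : ∀ m, (∑ᶠ (r : ℕ), ∑ s ∈ Ss, F m r s) = ∑ r ∈ Sr, ∑ s ∈ Ss, F m r s := by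
    intro m
    apply finsum_eq_finset_sum_of_support_subset
    intro r hr
    obtain ⟨s, hs⟩ := Finset.exists_ne_zero_of_sum_ne_zero hr
    obtain ⟨i, hi, hgi⟩ := hsupp m r s hs.2
    simp only [hSr, Finset.coe_image, Set.mem_image, Finset.mem_coe]
    exact ⟨i, hi, by rw [hgi]⟩
  have step3 : (∑ᶠ (m : ℕ → ℕ), ∑ r ∈ Sr, ∑ s ∈ Ss, F m r s)
      = ∑ m ∈ Sm, ∑ r ∈ Sr, ∑ s ∈ Ss, F m r s := by
    apply finsum_eq_finset_sum_of_support_subset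
    intro m hm
    obtain ⟨r, hr⟩ := Finset.exists_ne_zero_of_sum_ne_zero hm
    obtain ⟨s, hs⟩ := Finset.exists_ne_zero_of_sum_ne_zero hr.2
    obtain ⟨i, hi, hgi⟩ := hsupp m r s hs.2
    simp only [hSm, Finset.coe_image, Set.mem_image, Finset.mem_coe]
    exact ⟨i, hi, by rw [hgi]⟩
  have e1 : (∑ᶠ (m : ℕ → ℕ), ∑ᶠ (r : ℕ), ∑ᶠ (s : ℕ), F m r s)
      = ∑ m ∈ Sm, ∑ r ∈ Sr, ∑ s ∈ Ss, F m r s := by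
    rw [← step3]
    apply finsum_congr
    intro m
    rw [← step2 m]
    apply finsum_congr
    intro r
    exact step1 m r
  rw [e1]
  -- turn into a sum over the product finset
  have e2 : (∑ m ∈ Sm, ∑ r ∈ Sr, ∑ s ∈ Ss, F m r s)
      = ∑ t ∈ Sm ×ˢ (Sr ×ˢ Ss), F t.1 t.2.1 t.2.2 := by
    rw [Finset.sum_product]
    apply Finset.sum_congr rfl
    intro m _
    rw [Finset.sum_product]
  rw [e2]
  have hsub : S.image g ⊆ Sm ×ˢ (Sr ×ˢ Ss) := by
    intro t ht
    simp only [Finset.mem_image] at ht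
    obtain ⟨i, hi, rfl⟩ := ht
    simp only [Finset.mem_product, hSm, hSr, hSs, Finset.mem_image]
    exact ⟨⟨i, hi, rfl⟩, ⟨i, hi, rfl⟩, ⟨i, hi, rfl⟩⟩
  have e3 : (∑ t ∈ Sm ×ˢ (Sr ×ˢ Ss), F t.1 t.2.1 t.2.2)
      = ∑ t ∈ S.image g, F t.1 t.2.1 t.2.2 := by
    symm
    apply Finset.sum_subset hsub
    intro t _ htn
    by_contra hne
    obtain ⟨i, hi, hgi⟩ := hsupp t.1 t.2.1 t.2.2 hne
    apply htn
    simp only [Finset.mem_image]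
    exact ⟨i, hi, by rw [hgi]⟩
  rw [e3, Finset.sum_image (fun x hx y hy h => hinj hx hy h)]

def beta (a : ℕ) (p : ℕ → ℕ) (j : ℕ) : ℕ := p j + (a - 1 - j)

lemma beta_anti (a b : ℕ) (p : ℕ → ℕ) (hp : InRect a b p) {i j : ℕ} (hij : i ≤ j) (hj : j < a) :
    beta a p j + (j - i) ≤ beta a p i := by
  have h1 := hp.1 i j hij
  unfold beta; omega

def firstLow (a : ℕ) (p : ℕ → ℕ) (d : ℕ) : ℕ :=
  Nat.find (p := fun j => a ≤ j ∨ beta a p j < d) ⟨a, Or.inl le_rfl⟩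

def muOf (a : ℕ) (lam : ℕ → ℕ) (d r s : ℕ) : ℕ → ℕ := fun j =>
  if j < r then lam j else if j = r then d - (a - 1 - r) else if j ≤ s then lam (j - 1) + 1 else lam j

def nuOf (a : ℕ) (lam : ℕ → ℕ) (d r s : ℕ) : ℕ → ℕ := fun j =>
  if j < r then lam j else if j < s then lam (j + 1) - 1 else if j = s then d - (a - 1 - s) else lam j

lemma add_strip (a b ℓ i : ℕ) (lam : ℕ → ℕ) (hlam : InRect a b lam) (ha : 1 ≤ a)
    (hi : i < a) (hℓ : 1 ≤ ℓ) (hd : beta a lam i + ℓ < a + b)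
    (hnc : ∀ j, j < a → beta a lam j ≠ beta a lam i + ℓ) :
    firstLow a lam (beta a lam i + ℓ) ≤ i ∧
    InRect a b (muOf a lam (beta a lam i + ℓ) (firstLow a lam (beta a lam i + ℓ)) i) ∧
    IsBorderStripAt a lam (muOf a lam (beta a lam i + ℓ) (firstLow a lam (beta a lam i + ℓ)) i)
      ℓ (firstLow a lam (beta a lam i + ℓ)) i ∧
    beta a (muOf a lam (beta a lam i + ℓ) (firstLow a lam (beta a lam i + ℓ)) i)
      (firstLow a lam (beta a lam i + ℓ)) = beta a lam i + ℓ ∧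
    (∀ j, firstLow a lam (beta a lam i + ℓ) < j → j ≤ i →
      beta a (muOf a lam (beta a lam i + ℓ) (firstLow a lam (beta a lam i + ℓ)) i) j
        = beta a lam (j - 1)) ∧
    (∀ j, j < firstLow a lam (beta a lam i + ℓ) ∨ i < j →
      beta a (muOf a lam (beta a lam i + ℓ) (firstLow a lam (beta a lam i + ℓ)) i) j
        = beta a lam j) := by
  obtain ⟨hanti, hle, hzero⟩ := hlam
  set d := beta a lam i + ℓ with hdd
  set r := firstLow a lam d with hrr
  set mu := muOf a lam d r i with hmuu
  -- basic facts about r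
  have hri : r ≤ i := by
    rw [hrr]; unfold firstLow
    apply Nat.find_le
    right
    omega
  have hr_lt : ∀ j, j < r → d < beta a lam j := by
    intro j hj
    rw [hrr] at hj; unfold firstLow at hj
    have h1 : ¬ (a ≤ j ∨ beta a lam j < d) :=
      Nat.find_min (p := fun j => a ≤ j ∨ beta a lam j < d) ⟨a, Or.inl le_rfl⟩ hj
    push_neg at h1
    have := hnc j (by omega)
    omega
  have hcr : beta a lam r < d := by
    have h1 : a ≤ r ∨ beta a lam r < d := by
      rw [hrr]; unfold firstLow
      exact Nat.find_spec (p := fun j => a ≤ j ∨ beta a lam j < d) ⟨a, Or.inl le_rfl⟩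
    omega
  have hirℓ : i - r < ℓ := by
    have := beta_anti a b lam ⟨hanti, hle, hzero⟩ hri hi
    omega
  have hdar : a - 1 - r < d := by
    have : a - 1 - r ≤ beta a lam r := by unfold beta; omega
    omega
  -- values of mu
  have hmu_lt : ∀ j, j < r → mu j = lam j := by
    intro j hj; simp only [hmuu, muOf, if_pos hj]
  have hmu_r : mu r = d - (a - 1 - r) := by
    show muOf a lam d r i r = _
    unfold muOf
    simp
  have hmu_mid : ∀ j, r < j → j ≤ i → mu j = lam (j - 1) + 1 := by
    intro j h1 h2
    simp only [hmuu, muOf]; rw [if_neg (by omega), if_neg (by omega), if_pos h2]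
  have hmu_gt : ∀ j, i < j → mu j = lam j := by
    intro j hj
    simp only [hmuu, muOf]; rw [if_neg (by omega), if_neg (by omega), if_neg (by omega)]
  -- antitone
  have hadj : ∀ j, mu (j + 1) ≤ mu j := by
    intro j
    rcases Nat.lt_trichotomy (j + 1) r with h | h | h
    · rw [hmu_lt _ h, hmu_lt _ (by omega)]; exact hanti j (j + 1) (by omega)
    · -- j + 1 = r
      have e1 : mu (j + 1) = d - (a - 1 - r) := by rw [h]; exact hmu_r
      have e2 : mu j = lam j := hmu_lt j (by omega)
      have h2 := hr_lt j (by omega)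
      unfold beta at h2
      omega
    · rcases Nat.lt_trichotomy j r with h2 | h2 | h2
      · omega
      · -- j = r
        have e1 : mu j = d - (a - 1 - r) := by rw [h2]; exact hmu_r
        rcases Nat.lt_or_ge j i with h3 | h3
        · have e2 : mu (j + 1) = lam j + 1 := by
            rw [hmu_mid (j + 1) (by omega) (by omega)]
            simp
          unfold beta at hcr
          rw [← h2] at hcr
          omega
        · have hji : j = i := by omega
          have e2 : mu (j + 1) = lam (j + 1) := hmu_gt (j + 1) (by omega)
          unfold beta at hcr
          rw [← h2] at hcr
          have := hanti j (j + 1) (by omega)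
          omega
      · rcases Nat.lt_or_ge j i with h3 | h3
        · have e1 : mu (j + 1) = lam j + 1 := by
            rw [hmu_mid (j + 1) (by omega) (by omega)]; simp
          have e2 : mu j = lam (j - 1) + 1 := hmu_mid j h2 (by omega)
          have := hanti (j - 1) j (by omega)
          omega
        · rcases Nat.eq_or_lt_of_le h3 with h4 | h4
          · have e1 : mu (j + 1) = lam (j + 1) := hmu_gt (j + 1) (by omega)
            have e2 : mu j = lam (j - 1) + 1 := hmu_mid j h2 (by omega)
            have := hanti (j - 1) (j + 1) (by omega)
            omega
          · rw [hmu_gt (j + 1) (by omega), hmu_gt j (by omega)]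
            exact hanti j (j + 1) (by omega)
  have hmono : ∀ i j : ℕ, i ≤ j → mu j ≤ mu i := by
    intro x y hxy
    exact antitone_nat_of_succ_le hadj hxy
  have hmur_b : mu r ≤ b := by
    rcases Nat.eq_or_lt_of_le (Nat.zero_le r) with h | h
    · rw [hmu_r, ← h]
      omega
    · have h1 := hmono (r - 1) r (by omega)
      have h2 := hr_lt (r - 1) (by omega)
      rw [hmu_lt (r - 1) (by omega)] at h1
      have := hle (r - 1)
      omega
  have hrect : InRect a b mu := by
    refine ⟨hmono, ?_, ?_⟩
    · intro j
      rcases Nat.lt_or_ge j r with h | h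
      · rw [hmu_lt _ h]; exact hle j
      · exact le_trans (hmono r j h) hmur_b
    · intro j hj
      rw [hmu_gt j (by omega)]
      exact hzero j hj
  have hstrip : IsBorderStripAt a lam mu ℓ r i := by
    refine ⟨hri, hmu_lt, hmu_gt, ?_, ?_, ?_⟩
    · intro j h1 h2
      rcases Nat.eq_or_lt_of_le h1 with h3 | h3
      · rw [← h3, hmu_r]
        unfold beta at hcr
        omega
      · rw [hmu_mid j h3 h2]
        have := hanti (j - 1) j (by omega)
        omega
    · intro j h1 h2
      rw [hmu_mid (j + 1) (by omega) (by omega)]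
      simp only [Nat.add_sub_cancel]
    · have hsum := sum_diff_eq lam mu r i a hri hi
        (fun j hj => by rcases hj with hj | hj; exacts [hmu_lt j hj, hmu_gt j hj])
        hmu_mid hanti (by rw [hmu_r]; unfold beta at hcr; omega)
      rw [hmu_r] at hsum
      unfold beta at hdd
      omega
  refine ⟨hri, hrect, hstrip, ?_, ?_, ?_⟩
  · unfold beta; rw [hmu_r]; omega
  · intro j h1 h2
    unfold beta; rw [hmu_mid j h1 h2]
    omega
  · intro j hj
    unfold beta
    rcases hj with hj | hj
    · rw [hmu_lt j hj]
    · rw [hmu_gt j hj]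

lemma remove_strip (a b ℓ i : ℕ) (lam : ℕ → ℕ) (hlam : InRect a b lam) (ha : 1 ≤ a)
    (hi : i < a) (hℓ : 1 ≤ ℓ) (hℓn : ℓ < a + b) (hw : a + b ≤ beta a lam i + ℓ)
    (d : ℕ) (hd : d + (a + b) = beta a lam i + ℓ)
    (hnc : ∀ j, j < a → beta a lam j ≠ d) :
    i ≤ (firstLow a lam d - 1) ∧ (firstLow a lam d - 1) < a ∧
    (firstLow a lam d - 1) + 1 = firstLow a lam d ∧
    InRect a b (nuOf a lam d i (firstLow a lam d - 1)) ∧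
    IsBorderStripAt a (nuOf a lam d i (firstLow a lam d - 1)) lam (a + b - ℓ) i
      (firstLow a lam d - 1) ∧
    beta a (nuOf a lam d i (firstLow a lam d - 1)) (firstLow a lam d - 1) = d ∧
    (∀ j, i ≤ j → j < (firstLow a lam d - 1) →
      beta a (nuOf a lam d i (firstLow a lam d - 1)) j = beta a lam (j + 1)) ∧
    (∀ j, j < i ∨ (firstLow a lam d - 1) < j →
      beta a (nuOf a lam d i (firstLow a lam d - 1)) j = beta a lam j) := by
  obtain ⟨hanti, hle, hzero⟩ := hlam
  set s := firstLow a lam d - 1 with hst0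
  set nu := nuOf a lam d i s with hnu0
  have hdi : d < beta a lam i := by omega
  set t := firstLow a lam d with htt
  have hst : s = t - 1 := hst0
  -- t > i
  have hti : i < t := by
    rw [htt]; unfold firstLow
    rw [Nat.lt_find_iff]
    intro k hk
    have h1 := beta_anti a b lam ⟨hanti, hle, hzero⟩ hk hi
    omega
  have hta : t ≤ a := by
    rw [htt]; unfold firstLow
    exact Nat.find_le (Or.inl le_rfl)
  have hts : t = s + 1 := by omega
  have his : i ≤ s := by omega
  have hsa : s < a := by omega
  have hs_gt : ∀ j, j ≤ s → d < beta a lam j := by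
    intro j hj
    have hj' : j < t := by omega
    rw [htt] at hj'; unfold firstLow at hj'
    have h1 : ¬ (a ≤ j ∨ beta a lam j < d) :=
      Nat.find_min (p := fun j => a ≤ j ∨ beta a lam j < d) ⟨a, Or.inl le_rfl⟩ hj'
    push_neg at h1
    have := hnc j (by omega)
    omega
  have ht_spec : a ≤ t ∨ beta a lam t < d := by
    rw [htt]; unfold firstLow
    exact Nat.find_spec (p := fun j => a ≤ j ∨ beta a lam j < d) ⟨a, Or.inl le_rfl⟩
  -- d ≥ a - 1 - s
  have hd_lb : a - 1 - s ≤ d := by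
    rcases ht_spec with h | h
    · omega
    · have : a - 1 - t ≤ beta a lam t := by unfold beta; omega
      omega
  -- lam s ≥ 1 (pigeonhole)
  have hlams : 1 ≤ lam s := by
    by_contra h0
    have hlz : ∀ k, s ≤ k → lam k = 0 := by
      intro k hk
      have := hanti s k hk
      omega
    have hbs : beta a lam s = a - 1 - s := by unfold beta; rw [hlz s le_rfl]; omega
    have hds := hs_gt s le_rfl
    set k := a - 1 - d with hkk
    have hk1 : s ≤ k := by omega
    have hk2 : k < a := by omega
    have hbk : beta a lam k = d := by unfold beta; rw [hlz k hk1]; omega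
    exact hnc k hk2 hbk
  have hmid_pos : ∀ j, j ≤ s → 1 ≤ lam j := by
    intro j hj
    exact le_trans hlams (hanti j s hj)
  -- values of nu
  have hnu_lt : ∀ j, j < i → nu j = lam j := by
    intro j hj; show nuOf a lam d i s j = lam j
    unfold nuOf; rw [if_pos hj]
  have hnu_mid : ∀ j, i ≤ j → j < s → nu j = lam (j + 1) - 1 := by
    intro j h1 h2; show nuOf a lam d i s j = _
    unfold nuOf; rw [if_neg (by omega), if_pos h2]
  have hnu_s : nu s = d - (a - 1 - s) := by
    show nuOf a lam d i s s = _
    unfold nuOf; rw [if_neg (by omega), if_neg (by omega), if_pos rfl]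
  have hnu_gt : ∀ j, s < j → nu j = lam j := by
    intro j hj; show nuOf a lam d i s j = _
    unfold nuOf; rw [if_neg (by omega), if_neg (by omega), if_neg (by omega)]
  -- nu s < lam s
  have hnus_lt : nu s < lam s := by
    rw [hnu_s]
    have := hs_gt s le_rfl
    unfold beta at this
    omega
  -- antitone
  have hadj : ∀ j, nu (j + 1) ≤ nu j := by
    intro j
    rcases Nat.lt_trichotomy (j + 1) i with h | h | h
    · rw [hnu_lt _ h, hnu_lt _ (by omega)]; exact hanti j (j + 1) (by omega)
    · -- j + 1 = i
      rw [hnu_lt j (by omega)]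
      rcases Nat.lt_or_ge (j + 1) s with h2 | h2
      · rw [hnu_mid (j + 1) (by omega) h2]
        have := hanti j (j + 1 + 1) (by omega)
        omega
      · have hjs : j + 1 = s := by omega
        rw [hjs, hnu_s]
        have := hs_gt s le_rfl
        unfold beta at this
        have h3 := hanti j s (by omega)
        omega
    · rcases Nat.lt_trichotomy (j + 1) s with h2 | h2 | h2
      · rw [hnu_mid (j + 1) (by omega) h2, hnu_mid j (by omega) (by omega)]
        have := hanti (j + 1) (j + 1 + 1) (by omega)
        omega
      · rw [h2, hnu_s, hnu_mid j (by omega) (by omega)]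
        have := hs_gt s le_rfl
        unfold beta at this
        rw [← h2] at this ⊢
        omega
      · rcases Nat.lt_trichotomy j s with h3 | h3 | h3
        · omega
        · rw [h3, hnu_s, hnu_gt (s + 1) (by omega)]
          rcases ht_spec with h4 | h4
          · rw [hzero (s + 1) (by omega)]
            omega
          · unfold beta at h4
            rw [hts] at h4
            omega
        · rw [hnu_gt (j + 1) (by omega), hnu_gt j (by omega)]
          exact hanti j (j + 1) (by omega)
  have hmono : ∀ x y : ℕ, x ≤ y → nu y ≤ nu x := by
    intro x y hxy
    exact antitone_nat_of_succ_le hadj hxy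
  have hnu_le_lam : ∀ j, nu j ≤ lam j := by
    intro j
    rcases Nat.lt_or_ge j i with h | h
    · rw [hnu_lt j h]
    · rcases Nat.lt_or_ge j s with h2 | h2
      · rw [hnu_mid j h h2]
        have := hanti j (j + 1) (by omega)
        omega
      · rcases Nat.eq_or_lt_of_le h2 with h3 | h3
        · rw [← h3]; exact le_of_lt hnus_lt
        · rw [hnu_gt j h3]
  have hrect : InRect a b nu := by
    refine ⟨hmono, fun j => le_trans (hnu_le_lam j) (hle j), fun j hj => ?_⟩
    rw [hnu_gt j (by omega)]
    exact hzero j hj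
  have hstrip : IsBorderStripAt a nu lam (a + b - ℓ) i s := by
    refine ⟨his, fun k hk => (hnu_lt k hk).symm, fun k hk => (hnu_gt k hk).symm, ?_, ?_, ?_⟩
    · intro k h1 h2
      rcases Nat.eq_or_lt_of_le h2 with h3 | h3
      · rw [h3]; exact hnus_lt
      · rw [hnu_mid k h1 h3]
        have := hmid_pos (k + 1) (by omega)
        have := hanti k (k + 1) (by omega)
        omega
    · intro k h1 h2
      rw [hnu_mid k h1 h2]
      have := hmid_pos (k + 1) (by omega)
      omega
    · have hsum := sum_diff_eq nu lam i s a his hsa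
        (fun j hj => by rcases hj with hj | hj; exacts [(hnu_lt j hj).symm, (hnu_gt j hj).symm])
        (fun j h1 h2 => by
          rw [hnu_mid (j - 1) (by omega) (by omega)]
          have e : j - 1 + 1 = j := by omega
          rw [e]
          have := hmid_pos j h2
          omega)
        hmono (hnu_le_lam i)
      rw [hnu_s] at hsum
      unfold beta at hd
      omega
  refine ⟨his, hsa, hts.symm, hrect, hstrip, ?_, ?_, ?_⟩
  · unfold beta; rw [hnu_s]; omega
  · intro j h1 h2
    unfold beta
    rw [hnu_mid j h1 h2]
    have := hmid_pos (j + 1) (by omega)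
    omega
  · intro j hj
    unfold beta
    rcases hj with hj | hj
    · rw [hnu_lt j hj]
    · rw [hnu_gt j hj]

lemma backward_add (a b ℓ r s : ℕ) (lam mu : ℕ → ℕ) (hlam : InRect a b lam)
    (hmu : InRect a b mu) (hst : IsBorderStripAt a lam mu ℓ r s) (ha : 1 ≤ a) (hℓ : 1 ≤ ℓ) :
    s < a ∧ beta a mu r = beta a lam s + ℓ ∧ beta a lam s + ℓ < a + b ∧
    (∀ j, j < a → beta a lam j ≠ beta a lam s + ℓ) ∧
    r = firstLow a lam (beta a lam s + ℓ) ∧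
    mu = muOf a lam (beta a lam s + ℓ) r s := by
  obtain ⟨hrs, hlo, hhi, hstrict, hconn, hsum⟩ := hst
  have hsa : s < a := by
    by_contra h
    push_neg at h
    have h1 := hmu.2.2 s h
    have h2 := hstrict s hrs le_rfl
    omega
  have hra : r < a := by omega
  have hkey : ℓ + lam s = mu r + (s - r) := by
    have := sum_diff_eq lam mu r s a hrs hsa
      (fun j hj => by rcases hj with hj | hj; exacts [hlo j hj, hhi j hj])
      (fun j h1 h2 => by
        have := hconn (j - 1) (by omega) (by omega)
        have e : j - 1 + 1 = j := by omega
        rw [e] at this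
        exact this)
      hlam.1 (le_of_lt (hstrict r le_rfl hrs))
    omega
  have hmur : beta a mu r = beta a lam s + ℓ := by
    unfold beta; omega
  have hdab : beta a lam s + ℓ < a + b := by
    have h1 := hmu.2.1 r
    unfold beta at hmur ⊢
    omega
  set d := beta a lam s + ℓ with hdd
  have hbmu_lo : ∀ j, j < r ∨ s < j → beta a mu j = beta a lam j := by
    intro j hj
    unfold beta
    rcases hj with hj | hj
    · rw [hlo j hj]
    · rw [hhi j hj]
  have hbmu_mid : ∀ j, r < j → j ≤ s → beta a mu j = beta a lam (j - 1) := by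
    intro j h1 h2
    have e := hconn (j - 1) (by omega) (by omega)
    have e2 : j - 1 + 1 = j := by omega
    rw [e2] at e
    unfold beta
    rw [e]
    omega
  -- no collision
  have hnc : ∀ j, j < a → beta a lam j ≠ d := by
    intro j hja
    rcases Nat.lt_or_ge j r with h | h
    · have h1 := beta_anti a b mu hmu (le_of_lt h) hra
      rw [hbmu_lo j (Or.inl h), hmur] at h1
      omega
    · rcases le_or_gt j s with h2 | h2
      · have h1 := beta_anti a b lam hlam h hja
        have h3 := hstrict r le_rfl hrs
        have h4 : beta a lam r < beta a mu r := by unfold beta; omega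
        rw [hmur] at h4
        omega
      · have h1 := beta_anti a b mu hmu (le_of_lt (lt_of_le_of_lt hrs h2) : r ≤ j) hja
        rw [hbmu_lo j (Or.inr h2), hmur] at h1
        omega
  have hbr : beta a lam r < d := by
    have h3 := hstrict r le_rfl hrs
    have h4 : beta a lam r < beta a mu r := by unfold beta; omega
    rw [hmur] at h4
    exact h4
  have hrfl : r = firstLow a lam d := by
    unfold firstLow
    symm
    rw [Nat.find_eq_iff]
    constructor
    · exact Or.inr hbr
    · intro k hk
      push_neg
      constructor
      · omega
      · have h1 := beta_anti a b mu hmu (le_of_lt hk) hra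
        rw [hbmu_lo k (Or.inl hk), hmur] at h1
        omega
  have hmuof : mu = muOf a lam d r s := by
    funext j
    unfold muOf
    rcases Nat.lt_trichotomy j r with h | h | h
    · rw [if_pos h]; exact hlo j h
    · subst h
      rw [if_neg (by omega), if_pos rfl]
      have : beta a mu j = d := hmur
      unfold beta at this
      omega
    · rw [if_neg (by omega), if_neg (by omega)]
      rcases le_or_gt j s with h2 | h2
      · rw [if_pos h2]
        have e := hconn (j - 1) (by omega) (by omega)
        have e2 : j - 1 + 1 = j := by omega
        rw [e2] at e
        exact e
      · rw [if_neg (by omega)]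
        exact hhi j h2
  exact ⟨hsa, hmur, hdab, hnc, hrfl, hmuof⟩

lemma backward_remove (a b ℓ r s : ℕ) (lam nu : ℕ → ℕ) (hlam : InRect a b lam)
    (hnu : InRect a b nu) (hst : IsBorderStripAt a nu lam (a + b - ℓ) r s)
    (ha : 1 ≤ a) (hℓn : ℓ < a + b) :
    s < a ∧ a + b ≤ beta a lam r + ℓ ∧ beta a nu s + (a + b) = beta a lam r + ℓ ∧
    (∀ j, j < a → beta a lam j ≠ beta a nu s) ∧
    s + 1 = firstLow a lam (beta a nu s) ∧
    nu = nuOf a lam (beta a nu s) r s := by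
  obtain ⟨hrs, hlo, hhi, hstrict, hconn, hsum⟩ := hst
  have hsa : s < a := by
    by_contra h
    push_neg at h
    have h1 := hlam.2.2 s h
    have h2 := hstrict s hrs le_rfl
    omega
  have hra : r < a := by omega
  have hkey : (a + b - ℓ) + nu s = lam r + (s - r) := by
    have := sum_diff_eq nu lam r s a hrs hsa
      (fun j hj => by rcases hj with hj | hj; exacts [hlo j hj, hhi j hj])
      (fun j h1 h2 => by
        have := hconn (j - 1) (by omega) (by omega)
        have e : j - 1 + 1 = j := by omega
        rw [e] at this
        exact this)
      hnu.1 (le_of_lt (hstrict r le_rfl hrs))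
    omega
  have hbeq : beta a nu s + (a + b) = beta a lam r + ℓ := by
    unfold beta; omega
  have hwrap : a + b ≤ beta a lam r + ℓ := by omega
  set d := beta a nu s with hdd
  have hbnu_lo : ∀ j, j < r ∨ s < j → beta a nu j = beta a lam j := by
    intro j hj
    unfold beta
    rcases hj with hj | hj
    · rw [hlo j hj]
    · rw [hhi j hj]
  have hbnu_mid : ∀ j, r ≤ j → j < s → beta a nu j = beta a lam (j + 1) := by
    intro j h1 h2
    have e := hconn j h1 h2
    unfold beta
    rw [e]
    omega
  have hnc : ∀ j, j < a → beta a lam j ≠ d := by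
    intro j hja
    rcases Nat.lt_or_ge j r with h | h
    · have h1 := beta_anti a b nu hnu (le_of_lt (lt_of_lt_of_le h hrs) : j ≤ s) hsa
      rw [hbnu_lo j (Or.inl h)] at h1
      omega
    · rcases le_or_gt j s with h2 | h2
      · have h1 := beta_anti a b lam hlam h2 hsa
        have h3 := hstrict s hrs le_rfl
        have h4 : beta a nu s < beta a lam s := by unfold beta; omega
        omega
      · have h1 := beta_anti a b nu hnu (le_of_lt h2 : s ≤ j) hja
        rw [hbnu_lo j (Or.inr h2)] at h1
        omega
  have hsfl : s + 1 = firstLow a lam d := by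
    unfold firstLow
    symm
    rw [Nat.find_eq_iff]
    constructor
    · rcases Nat.lt_or_ge (s + 1) a with h | h
      · right
        rw [← hbnu_lo (s + 1) (Or.inr (by omega))]
        have h1 := beta_anti a b nu hnu (by omega : s ≤ s + 1) h
        omega
      · exact Or.inl h
    · intro k hk
      push_neg
      constructor
      · omega
      · rcases Nat.lt_or_ge k r with h | h
        · have h1 := beta_anti a b nu hnu (le_of_lt (lt_of_lt_of_le h hrs) : k ≤ s) hsa
          rw [hbnu_lo k (Or.inl h)] at h1
          omega
        · have h1 := beta_anti a b lam hlam (by omega : k ≤ s) hsa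
          have h3 := hstrict s hrs le_rfl
          have h4 : beta a nu s < beta a lam s := by unfold beta; omega
          omega
  have hnuof : nu = nuOf a lam d r s := by
    funext j
    unfold nuOf
    rcases Nat.lt_trichotomy j r with h | h | h
    · rw [if_pos h]; exact (hlo j h).symm
    · rcases Nat.lt_or_ge j s with h2 | h2
      · rw [if_neg (by omega), if_pos h2]
        have e := hconn j (by omega) h2
        omega
      · have hjs : j = s := by omega
        rw [if_neg (by omega), if_neg (by omega), if_pos hjs]
        rw [hjs]
        have : beta a nu s = d := rfl
        unfold beta at this
        omega
    · rcases Nat.lt_or_ge j s with h2 | h2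
      · rw [if_neg (by omega), if_pos h2]
        have e := hconn j (by omega) h2
        omega
      · rcases Nat.eq_or_lt_of_le h2 with h3 | h3
        · rw [if_neg (by omega), if_neg (by omega), if_pos h3.symm]
          rw [← h3]
          have : beta a nu s = d := rfl
          unfold beta at this
          omega
        · rw [if_neg (by omega), if_neg (by omega), if_neg (by omega)]
          exact (hhi j h3).symm
  exact ⟨hsa, hwrap, hbeq, hnc, hsfl, hnuof⟩

lemma wedge_term (n a : ℕ) (lam mu : ℕ → ℕ) (r s : ℕ) (hr : r ≤ s) (hs : s < a) (d : ℕ)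
    (hbr : beta a mu r = d)
    (hmid : ∀ j, r < j → j ≤ s → beta a mu j = beta a lam (j - 1))
    (hoff : ∀ j, j < a → (j < r ∨ s < j) → beta a mu j = beta a lam j) :
    wedge n a (Function.update (fun i : Fin a => stdv n (beta a lam ↑i)) ⟨s, hs⟩ (stdv n d))
      = ((-1 : ℂ) ^ (s - r)) • wedge n a (fun i : Fin a => stdv n (beta a mu ↑i)) := by
  apply wedge_slide n a (s - r) r s (by omega) hs
  · intro j hj
    rw [Function.update_of_ne (by intro h; rw [h] at hj; simp at hj; omega)]
    rw [hoff ↑j j.isLt (by omega)]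
  · rw [Function.update_self, hbr]
  · intro j h1 h2
    rw [Function.update_of_ne (by intro h; have := congrArg Fin.val h; simp at this; omega)]
    rw [hmid (j + 1) (by omega) (by omega)]
    simp

lemma wedge_term2 (n a : ℕ) (lam nu : ℕ → ℕ) (r s : ℕ) (hr : r ≤ s) (hs : s < a) (d : ℕ)
    (hbs : beta a nu s = d)
    (hmid : ∀ j, r ≤ j → j < s → beta a nu j = beta a lam (j + 1))
    (hoff : ∀ j, j < a → (j < r ∨ s < j) → beta a nu j = beta a lam j) :
    wedge n a (Function.update (fun i : Fin a => stdv n (beta a lam ↑i)) ⟨r, by omega⟩ (stdv n d))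
      = ((-1 : ℂ) ^ (s - r)) • wedge n a (fun i : Fin a => stdv n (beta a nu ↑i)) := by
  have h := wedge_slide n a (s - r) r s (by omega) hs
    (fun i : Fin a => stdv n (beta a nu ↑i))
    (Function.update (fun i : Fin a => stdv n (beta a lam ↑i)) ⟨r, by omega⟩ (stdv n d))
    (by
      intro j hj
      rw [Function.update_of_ne (by intro h; rw [h] at hj; simp at hj; omega)]
      show stdv n (beta a nu ↑j) = stdv n (beta a lam ↑j)
      rw [hoff ↑j j.isLt (by omega)])
    (by
      rw [Function.update_self]
      show stdv n (beta a nu s) = stdv n d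
      rw [hbs])
    (by
      intro j h1 h2
      rw [Function.update_of_ne (by intro h; have := congrArg Fin.val h; simp at this; omega)]
      show stdv n (beta a nu j) = stdv n (beta a lam (j + 1))
      rw [hmid j h1 h2])
  have he : ((-1 : ℂ) ^ (s - r)) * ((-1 : ℂ) ^ (s - r)) = 1 := by
    rw [← pow_add]
    exact Even.neg_one_pow ⟨s - r, by omega⟩
  rw [h, smul_smul, he, one_smul]

set_option maxHeartbeats 2000000
set_option synthInstance.maxHeartbeats 400000

/-- explicit quantum Satake for `G(a,b)`.  The derivation extension
`ρ((X_q)^ℓ)` of the `ℓ`-th power of the cyclic element acts on the basis vector `e_λ`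
of `Λ^a ℂ^n` by the quantum Murnaghan–Nakayama rule:
`ρ((X_q)^ℓ)(e_λ) = Σ_μ (-1)^{ht(μ/λ)} e_μ + q Σ_ν (-1)^{ht(λ/ν)} e_ν`. -/
theorem statement3 (a b n : ℕ) (ha : 1 ≤ a) (hb : 1 ≤ b) (hn : n = a + b) (q : ℂ)
    (Xq : Module.End ℂ (Fin n → ℂ))
    (hXq : ∀ k : Fin n, Xq (stdv n k) =
      if (k : ℕ) + 1 < n then stdv n ((k : ℕ) + 1) else q • stdv n 0)
    (ℓ : ℕ) (hℓ : 1 ≤ ℓ) (hℓn : ℓ ≤ n - 1)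
    (ρ : Module.End ℂ (⋀[ℂ]^a (Fin n → ℂ)))
    (hρ : ∀ v : Fin a → (Fin n → ℂ),
      ρ (wedge n a v) = ∑ i : Fin a, wedge n a (Function.update v i ((Xq ^ ℓ) (v i))))
    (lam : ℕ → ℕ) (hlam : InRect a b lam) :
    ρ (eLam n a lam) =
      (∑ᶠ (mu : ℕ → ℕ) (r : ℕ) (s : ℕ)
          (_ : InRect a b mu ∧ IsBorderStripAt a lam mu ℓ r s),
          ((-1 : ℂ) ^ (s - r)) • eLam n a mu) +
      q • (∑ᶠ (nu : ℕ → ℕ) (r : ℕ) (s : ℕ)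
          (_ : InRect a b nu ∧ IsBorderStripAt a nu lam (n - ℓ) r s),
          ((-1 : ℂ) ^ (s - r)) • eLam n a nu) := by
  classical
  subst hn
  have hab : 2 ≤ a + b := by omega
  have hℓab : ℓ < a + b := by omega
  have hbeta_lt : ∀ j, j < a → beta a lam j < a + b := by
    intro j hj
    have := hlam.2.1 j
    unfold beta; omega
  set v : Fin a → (Fin (a + b) → ℂ) := fun i => stdv (a + b) (beta a lam ↑i) with hvv
  have heL : eLam (a + b) a lam = wedge (a + b) a v := rfl
  rw [heL, hρ v]
  set P1 : Fin a → Prop := fun i =>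
    beta a lam ↑i + ℓ < a + b ∧ ∀ j, j < a → beta a lam j ≠ beta a lam ↑i + ℓ with hP1
  set P2 : Fin a → Prop := fun i =>
    a + b ≤ beta a lam ↑i + ℓ ∧
      ∀ j, j < a → beta a lam j ≠ beta a lam ↑i + ℓ - (a + b) with hP2
  set G1 : Fin a → ⋀[ℂ]^a (Fin (a + b) → ℂ) := fun i =>
    if P1 i then
      ((-1 : ℂ) ^ ((i : ℕ) - firstLow a lam (beta a lam ↑i + ℓ))) •
        eLam (a + b) a (muOf a lam (beta a lam ↑i + ℓ)
          (firstLow a lam (beta a lam ↑i + ℓ)) ↑i)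
    else 0 with hG1
  set G2 : Fin a → ⋀[ℂ]^a (Fin (a + b) → ℂ) := fun i =>
    if P2 i then
      ((-1 : ℂ) ^ ((firstLow a lam (beta a lam ↑i + ℓ - (a + b)) - 1) - (i : ℕ))) •
        eLam (a + b) a (nuOf a lam (beta a lam ↑i + ℓ - (a + b)) ↑i
          (firstLow a lam (beta a lam ↑i + ℓ - (a + b)) - 1))
    else 0 with hG2
  -- per-term computation
  have hterm : ∀ i : Fin a,
      wedge (a + b) a (Function.update v i ((Xq ^ ℓ) (v i))) = G1 i + q • G2 i := by
    intro i
    have hia : (i : ℕ) < a := i.isLt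
    have hxv : (Xq ^ ℓ) (v i) = if beta a lam ↑i + ℓ < a + b
        then stdv (a + b) (beta a lam ↑i + ℓ)
        else q • stdv (a + b) (beta a lam ↑i + ℓ - (a + b)) :=
      Xq_pow (a + b) q Xq hXq ℓ (beta a lam ↑i) (hbeta_lt ↑i hia)
        (by have := hbeta_lt ↑i hia; omega)
    by_cases hw : beta a lam ↑i + ℓ < a + b
    · rw [hxv, if_pos hw]
      have hnP2 : ¬ P2 i := by
        intro hc
        have := hc.1
        omega
      have hG2z : G2 i = 0 := by
        simp only [hG2]
        rw [if_neg hnP2]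
      rw [hG2z, smul_zero, add_zero]
      by_cases hgood : ∀ j, j < a → beta a lam j ≠ beta a lam ↑i + ℓ
      · have hP : P1 i := ⟨hw, hgood⟩
        obtain ⟨hri, hrect, hstrip, hb4, hb5, hb6⟩ :=
          add_strip a b ℓ ↑i lam hlam ha hia hℓ hw hgood
        simp only [hG1]
        rw [if_pos hP]
        exact wedge_term (a + b) a lam
          (muOf a lam (beta a lam ↑i + ℓ) (firstLow a lam (beta a lam ↑i + ℓ)) ↑i)
          (firstLow a lam (beta a lam ↑i + ℓ)) ↑i hri hia (beta a lam ↑i + ℓ)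
          hb4 hb5 (fun j _ hj => hb6 j hj)
      · have hG1z : G1 i = 0 := by
          simp only [hG1]
          rw [if_neg]
          simp only [hP1]
          tauto
        rw [hG1z]
        push_neg at hgood
        obtain ⟨j, hja, hbj⟩ := hgood
        have hji : j ≠ (i : ℕ) := by
          intro h
          rw [h] at hbj
          omega
        apply wedge_eq_zero (a + b) a _ ⟨j, hja⟩ i
          (by intro h; exact hji (congrArg Fin.val h))
        rw [Function.update_self, Function.update_of_ne
          (by intro h; exact hji (congrArg Fin.val h))]
        show stdv (a + b) (beta a lam j) = stdv (a + b) (beta a lam ↑i + ℓ)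
        rw [hbj]
    · rw [hxv, if_neg hw]
      have hnP1 : ¬ P1 i := by
        intro hc
        have := hc.1
        omega
      have hG1z : G1 i = 0 := by
        simp only [hG1]
        rw [if_neg hnP1]
      rw [hG1z, zero_add]
      rw [wedge_smul]
      set d : ℕ := beta a lam ↑i + ℓ - (a + b) with hdd
      by_cases hgood : ∀ j, j < a → beta a lam j ≠ d
      · have hP : P2 i := ⟨by omega, hgood⟩
        obtain ⟨his, hsa, hts, hrect, hstrip, hb4, hb5, hb6⟩ :=
          remove_strip a b ℓ ↑i lam hlam ha hia hℓ hℓab (by omega) d (by omega) hgood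
        simp only [hG2]
        rw [if_pos hP]
        congr 1
        exact wedge_term2 (a + b) a lam
          (nuOf a lam d ↑i (firstLow a lam d - 1)) ↑i (firstLow a lam d - 1)
          his hsa d hb4 hb5 (fun j _ hj => hb6 j hj)
      · have hG2z : G2 i = 0 := by
          simp only [hG2]
          rw [if_neg]
          simp only [hP2]
          tauto
        rw [hG2z, smul_zero]
        push_neg at hgood
        obtain ⟨j, hja, hbj⟩ := hgood
        have hji : j ≠ (i : ℕ) := by
          intro h
          rw [h] at hbj
          omega
        rw [wedge_eq_zero (a + b) a _ ⟨j, hja⟩ i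
          (by intro h; exact hji (congrArg Fin.val h))
          (by
            rw [Function.update_self, Function.update_of_ne
              (by intro h; exact hji (congrArg Fin.val h))]
            show stdv (a + b) (beta a lam j) = stdv (a + b) d
            rw [hbj]), smul_zero]
  have hsplit : (∑ i : Fin a, wedge (a + b) a (Function.update v i ((Xq ^ ℓ) (v i))))
      = (∑ i : Fin a, G1 i) + q • (∑ i : Fin a, G2 i) := by
    rw [Finset.smul_sum, ← Finset.sum_add_distrib]
    exact Finset.sum_congr rfl (fun i _ => hterm i)
  rw [hsplit]
  -- first finsum
  set F1 : (ℕ → ℕ) → ℕ → ℕ → ⋀[ℂ]^a (Fin (a + b) → ℂ) := fun mu r s =>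
    if InRect a b mu ∧ IsBorderStripAt a lam mu ℓ r s then
      ((-1 : ℂ) ^ (s - r)) • eLam (a + b) a mu else 0 with hF1
  set F2 : (ℕ → ℕ) → ℕ → ℕ → ⋀[ℂ]^a (Fin (a + b) → ℂ) := fun nu r s =>
    if InRect a b nu ∧ IsBorderStripAt a nu lam (a + b - ℓ) r s then
      ((-1 : ℂ) ^ (s - r)) • eLam (a + b) a nu else 0 with hF2
  set S1 : Finset (Fin a) := Finset.univ.filter P1 with hS1
  set S2 : Finset (Fin a) := Finset.univ.filter P2 with hS2
  set g1 : Fin a → ((ℕ → ℕ) × ℕ × ℕ) := fun i =>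
    (muOf a lam (beta a lam ↑i + ℓ) (firstLow a lam (beta a lam ↑i + ℓ)) ↑i,
      firstLow a lam (beta a lam ↑i + ℓ), (i : ℕ)) with hg1
  set g2 : Fin a → ((ℕ → ℕ) × ℕ × ℕ) := fun i =>
    (nuOf a lam (beta a lam ↑i + ℓ - (a + b)) ↑i
        (firstLow a lam (beta a lam ↑i + ℓ - (a + b)) - 1),
      (i : ℕ), firstLow a lam (beta a lam ↑i + ℓ - (a + b)) - 1) with hg2
  have hA : (∑ᶠ (mu : ℕ → ℕ) (r : ℕ) (s : ℕ)
      (_ : InRect a b mu ∧ IsBorderStripAt a lam mu ℓ r s),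
      ((-1 : ℂ) ^ (s - r)) • eLam (a + b) a mu) = ∑ i : Fin a, G1 i := by
    have e1 : (∑ᶠ (mu : ℕ → ℕ) (r : ℕ) (s : ℕ)
        (_ : InRect a b mu ∧ IsBorderStripAt a lam mu ℓ r s),
        ((-1 : ℂ) ^ (s - r)) • eLam (a + b) a mu)
        = ∑ᶠ (mu : ℕ → ℕ), ∑ᶠ (r : ℕ), ∑ᶠ (s : ℕ), F1 mu r s := by
      apply finsum_congr; intro mu
      apply finsum_congr; intro r
      apply finsum_congr; intro s
      rw [finsum_eq_if, hF1]
    rw [e1]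
    rw [finsum3 F1 S1 g1
      (by
        intro x hx y hy hxy
        have := congrArg (fun t => t.2.2) hxy
        simp only [hg1] at this
        exact Fin.ext this)
      (by
        intro m r s hne
        have hP : InRect a b m ∧ IsBorderStripAt a lam m ℓ r s := by
          by_contra hc
          apply hne
          simp only [hF1]
          rw [if_neg hc]
        obtain ⟨hsa, hmur, hdab, hnc, hrfl, hmuof⟩ :=
          backward_add a b ℓ r s lam m hlam hP.1 hP.2 ha hℓ
        refine ⟨⟨s, hsa⟩, ?_, ?_⟩
        · simp only [hS1, Finset.mem_filter, Finset.mem_univ, true_and, hP1]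
          exact ⟨hdab, hnc⟩
        · simp only [hg1]
          rw [← hrfl, ← hmuof])]
    -- now a plain finset sum comparison
    rw [hS1, Finset.sum_filter]
    apply Finset.sum_congr rfl
    intro i _
    by_cases hPi : P1 i
    · rw [if_pos hPi]
      obtain ⟨hri, hrect, hstrip, hb4, hb5, hb6⟩ :=
        add_strip a b ℓ ↑i lam hlam ha i.isLt hℓ hPi.1 hPi.2
      simp only [hF1, hg1, hG1]
      rw [if_pos ⟨hrect, hstrip⟩, if_pos hPi]
    · rw [if_neg hPi]
      simp only [hG1]
      rw [if_neg hPi]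
  have hB : (∑ᶠ (nu : ℕ → ℕ) (r : ℕ) (s : ℕ)
      (_ : InRect a b nu ∧ IsBorderStripAt a nu lam (a + b - ℓ) r s),
      ((-1 : ℂ) ^ (s - r)) • eLam (a + b) a nu) = ∑ i : Fin a, G2 i := by
    have e1 : (∑ᶠ (nu : ℕ → ℕ) (r : ℕ) (s : ℕ)
        (_ : InRect a b nu ∧ IsBorderStripAt a nu lam (a + b - ℓ) r s),
        ((-1 : ℂ) ^ (s - r)) • eLam (a + b) a nu)
        = ∑ᶠ (nu : ℕ → ℕ), ∑ᶠ (r : ℕ), ∑ᶠ (s : ℕ), F2 nu r s := by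
      apply finsum_congr; intro nu
      apply finsum_congr; intro r
      apply finsum_congr; intro s
      rw [finsum_eq_if, hF2]
    rw [e1]
    rw [finsum3 F2 S2 g2
      (by
        intro x hx y hy hxy
        have := congrArg (fun t => t.2.1) hxy
        simp only [hg2] at this
        exact Fin.ext this)
      (by
        intro m r s hne
        have hP : InRect a b m ∧ IsBorderStripAt a m lam (a + b - ℓ) r s := by
          by_contra hc
          apply hne
          simp only [hF2]
          rw [if_neg hc]
        obtain ⟨hsa, hwrap, hbeq, hnc, hsfl, hnuof⟩ :=
          backward_remove a b ℓ r s lam m hlam hP.1 hP.2 ha hℓab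
        have hrs : r ≤ s := hP.2.1
        have hra : r < a := by omega
        have hde : beta a lam r + ℓ - (a + b) = beta a m s := by omega
        refine ⟨⟨r, hra⟩, ?_, ?_⟩
        · simp only [hS2, Finset.mem_filter, Finset.mem_univ, true_and, hP2]
          constructor
          · exact hwrap
          · intro j hja
            rw [hde]
            exact hnc j hja
        · simp only [hg2]
          rw [hde, ← hsfl]
          simp only [Nat.add_sub_cancel]
          rw [← hnuof]
      )]
    rw [hS2, Finset.sum_filter]
    apply Finset.sum_congr rfl
    intro i _
    by_cases hPi : P2 i
    · rw [if_pos hPi]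
      obtain ⟨his, hsa, hts, hrect, hstrip, hb4, hb5, hb6⟩ :=
        remove_strip a b ℓ ↑i lam hlam ha i.isLt hℓ hℓab hPi.1
          (beta a lam ↑i + ℓ - (a + b)) (by have := hPi.1; omega) hPi.2
      simp only [hF2, hg2, hG2]
      rw [if_pos ⟨hrect, hstrip⟩, if_pos hPi]
    · rw [if_neg hPi]
      simp only [hG2]
      rw [if_neg hPi]
  rw [hA, hB]
end

section
/- Let n ≥ 2 and q ∈ ℂ, q ≠ 0, and let ζ_1,…,ζ_{n−1} be complex numbers such that the squares ζ_1²,…,ζ_{n−1}² are exactly the n−1 distinct (n−1)-th roots of (−1)^n·4q (i.e. i ↦ ζ_i² is a bijection onto the solution set of w^{n−1} = (−1)^n 4q). Then: (1) in ℂ[T], ∏_{i=1}^{n−1} (1 − T ζ_i)(1 + T ζ_i) = 1 − (−1)^n·4q·T^{2n−2}; (2) consequently e_r(ζ_1,…,ζ_{n−1}) = h_r(ζ_1,…,ζ_{n−1}) for every 0 ≤ r ≤ 2n−3, where e_r and h_r are the elementary and complete homogeneous symmetric polynomials in n−1 variables. -/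
open Polynomial

lemma aux_prod_X_sub_C {m : ℕ} (hm : m ≠ 0) (a : ℂ) (c : Fin m → ℂ)
    (hinj : Function.Injective c) (hroots : ∀ i, (c i) ^ m = a) :
    ∏ i : Fin m, (X - C (c i)) = X ^ m - C a := by
  have hmonic : (X ^ m - C a).Monic := monic_X_pow_sub_C a hm
  have hsplits : Splits (X ^ m - C a) := IsAlgClosed.splits _
  have hcard : Multiset.card (X ^ m - C a).roots = m := by
    rw [splits_iff_card_roots.mp hsplits, natDegree_X_pow_sub_C]
  set M : Multiset ℂ := Finset.univ.val.map c with hM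
  have hnodup : M.Nodup := Finset.univ.nodup.map hinj
  have hsub : M ⊆ (X ^ m - C a).roots := by
    intro x hx
    rw [hM, Multiset.mem_map] at hx
    obtain ⟨i, -, rfl⟩ := hx
    rw [mem_roots hmonic.ne_zero]
    simp [IsRoot, hroots i]
  have hMcard : Multiset.card M = m := by simp [hM]
  have heq : M = (X ^ m - C a).roots :=
    Multiset.eq_of_le_of_card_le ((Multiset.le_iff_subset hnodup).mpr hsub)
      (by rw [hcard, hMcard])
  calc ∏ i : Fin m, (X - C (c i)) = (M.map fun x => X - C x).prod := by
        rw [hM, Multiset.map_map]; rfl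
    _ = X ^ m - C a := by rw [heq, ← hsplits.eq_prod_roots_of_monic hmonic]

lemma aux_geom (z : ℂ) :
    (1 - PowerSeries.C z * PowerSeries.X) * PowerSeries.mk (fun s => z ^ s) = 1 := by
  ext k
  rw [sub_mul, one_mul, map_sub, mul_assoc]
  cases k with
  | zero => simp
  | succ k => simp [PowerSeries.coeff_succ_X_mul, pow_succ, mul_comm]

lemma aux_esymm_coeff {m : ℕ} (ζ : Fin m → ℂ) (r : ℕ) :
    PowerSeries.coeff r (∏ i : Fin m, (1 + PowerSeries.C (ζ i) * PowerSeries.X))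
      = MvPolynomial.eval ζ (MvPolynomial.esymm (Fin m) ℂ r) := by
  have h1 : ∀ i : Fin m, (1 + PowerSeries.C (ζ i) * PowerSeries.X)
      = PowerSeries.C (ζ i) * PowerSeries.X + 1 := fun i => add_comm _ _
  simp_rw [h1, Finset.prod_add, Finset.prod_const_one, mul_one]
  have h2 : ∀ t : Finset (Fin m), ∏ i ∈ t, (PowerSeries.C (ζ i) * PowerSeries.X)
      = PowerSeries.C (∏ i ∈ t, ζ i) * PowerSeries.X ^ t.card := by
    intro t
    rw [Finset.prod_mul_distrib, map_prod, Finset.prod_const]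
  simp_rw [h2]
  rw [map_sum]
  simp_rw [PowerSeries.coeff_C_mul, PowerSeries.coeff_X_pow, mul_ite, mul_one, mul_zero]
  rw [MvPolynomial.esymm, map_sum]
  simp_rw [map_prod, MvPolynomial.eval_X]
  rw [Finset.powersetCard_eq_filter, Finset.sum_filter]
  exact Finset.sum_congr rfl fun t _ => by simp [eq_comm]

lemma aux_hsymm_coeff {m : ℕ} (ζ : Fin m → ℂ) (r : ℕ) :
    PowerSeries.coeff r (∏ i : Fin m, PowerSeries.mk (fun s => ζ i ^ s))
      = MvPolynomial.eval ζ (MvPolynomial.hsymm (Fin m) ℂ r) := by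
  classical
  rw [PowerSeries.coeff_prod]
  simp_rw [PowerSeries.coeff_mk]
  rw [MvPolynomial.hsymm, map_sum]
  have hval : ∀ s : Sym (Fin m) r,
      MvPolynomial.eval ζ ((s.1.map MvPolynomial.X).prod) = (s.1.map ζ).prod := by
    intro s
    rw [map_multiset_prod, Multiset.map_map]
    congr 1
    exact Multiset.map_congr rfl fun x _ => MvPolynomial.eval_X _
  simp_rw [hval]
  have hcard : ∀ l ∈ Finset.finsuppAntidiag (Finset.univ : Finset (Fin m)) r,
      Multiset.card (Finsupp.toMultiset l) = r := by
    intro l hl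
    rw [Finset.mem_finsuppAntidiag] at hl
    rw [Finsupp.card_toMultiset, Finsupp.sum_fintype _ _ (fun _ => rfl)]
    exact hl.1
  refine Finset.sum_bij' (i := fun l hl => (⟨Finsupp.toMultiset l, hcard l hl⟩ : Sym (Fin m) r))
    (j := fun s _ => Multiset.toFinsupp s.1) ?_ ?_ ?_ ?_ ?_
  · intro l hl; exact Finset.mem_univ _
  · intro s _
    rw [Finset.mem_finsuppAntidiag]
    refine ⟨?_, Finset.subset_univ _⟩
    have h1 : ∀ i ∈ Finset.univ, (Multiset.toFinsupp s.1) i = Multiset.count i s.1 :=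
      fun i _ => Multiset.toFinsupp_apply _ _
    rw [Finset.sum_congr rfl h1,
      ← Finset.sum_subset (Finset.subset_univ s.1.toFinset)
        (fun x _ hx => Multiset.count_eq_zero.mpr fun h => hx (Multiset.mem_toFinset.mpr h)),
      Multiset.toFinset_sum_count_eq]
    exact s.2
  · intro l hl
    simp
  · intro s _
    exact Sym.ext (by simp)
  · intro l hl
    rw [← Finsupp.prod_fintype _ _ (fun i => pow_zero (ζ i)),
      Finsupp.toMultiset_map, Finsupp.prod_toMultiset,
      Finsupp.prod_mapDomain_index (fun b => pow_zero b) (fun b m₁ m₂ => pow_add b m₁ m₂)]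

/-- let `ζ_1,…,ζ_{n-1}` be complex numbers whose squares are exactly the
`n-1` distinct `(n-1)`-th roots of `(-1)^n·4q` (`q ≠ 0`).  Then
`∏_i (1 - Tζ_i)(1 + Tζ_i) = 1 - (-1)^n·4q·T^{2n-2}` in `ℂ[T]`, and consequently
`e_r(ζ) = h_r(ζ)` for all `0 ≤ r ≤ 2n-3`. -/
theorem statement7 (n : ℕ) (hn : 2 ≤ n) (q : ℂ) (hq : q ≠ 0)
    (ζ : Fin (n - 1) → ℂ)
    (hinj : Function.Injective fun i => ζ i ^ 2)
    (himg : Set.range (fun i => ζ i ^ 2) = {w : ℂ | w ^ (n - 1) = (-1) ^ n * (4 * q)}) :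
    (∏ i : Fin (n - 1), ((1 - C (ζ i) * X) * (1 + C (ζ i) * X))
        = 1 - C ((-1) ^ n * (4 * q)) * X ^ (2 * n - 2)) ∧
    (∀ r : ℕ, r ≤ 2 * n - 3 →
      MvPolynomial.eval ζ (MvPolynomial.esymm (Fin (n - 1)) ℂ r)
        = MvPolynomial.eval ζ (MvPolynomial.hsymm (Fin (n - 1)) ℂ r)) := by
  set a : ℂ := (-1) ^ n * (4 * q) with ha_def
  have hroots : ∀ i, (ζ i ^ 2) ^ (n - 1) = a := by
    intro i
    have : ζ i ^ 2 ∈ Set.range (fun i => ζ i ^ 2) := ⟨i, rfl⟩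
    rw [himg] at this; exact this
  have key : ∏ i : Fin (n-1), (X - C (ζ i ^ 2)) = X ^ (n-1) - C a :=
    aux_prod_X_sub_C (by omega) a _ hinj hroots
  have part1 : ∏ i : Fin (n - 1), ((1 - C (ζ i) * X) * (1 + C (ζ i) * X))
      = 1 - C a * X ^ (2 * n - 2) := by
    apply Polynomial.funext
    intro x
    simp only [eval_prod, eval_mul, eval_sub, eval_add, eval_one, eval_C, eval_X, eval_pow]
    rcases eq_or_ne x 0 with rfl | hx
    · rw [zero_pow (by omega : 2*n-2 ≠ 0)]
      simp
    · have hx2 : x ^ 2 ≠ 0 := pow_ne_zero _ hx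
      have heval := congrArg (eval ((x ^ 2)⁻¹)) key
      simp only [eval_prod, eval_sub, eval_pow, eval_X, eval_C] at heval
      have h2m : x ^ (2*n-2) = (x ^ 2) ^ (n-1) := by
        rw [← pow_mul]; congr 1; omega
      calc ∏ i, ((1 - ζ i * x) * (1 + ζ i * x))
          = ∏ i, (x ^ 2 * ((x ^ 2)⁻¹ - ζ i ^ 2)) := by
            refine Finset.prod_congr rfl fun i _ => ?_
            field_simp
            ring
        _ = (x ^ 2) ^ (n-1) * ∏ i, ((x ^ 2)⁻¹ - ζ i ^ 2) := by
            rw [Finset.prod_mul_distrib, Finset.prod_const, Finset.card_univ, Fintype.card_fin]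
        _ = (x ^ 2) ^ (n-1) * (((x ^ 2)⁻¹) ^ (n-1) - a) := by rw [heval]
        _ = 1 - a * x ^ (2*n-2) := by
            rw [mul_sub, ← mul_pow, mul_inv_cancel₀ hx2, one_pow, h2m]; ring
  refine ⟨part1, ?_⟩
  -- move part 1 to power series
  have hcast : ∏ i : Fin (n - 1),
      ((1 - PowerSeries.C (ζ i) * PowerSeries.X) * (1 + PowerSeries.C (ζ i) * PowerSeries.X))
      = 1 - PowerSeries.C a * PowerSeries.X ^ (2 * n - 2) := by
    have := congrArg (Polynomial.coeToPowerSeries.ringHom (R := ℂ)) part1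
    simpa [map_prod, map_mul, map_sub, map_add, map_one, map_pow,
      Polynomial.coeToPowerSeries.ringHom_apply, Polynomial.coe_sub, Polynomial.coe_add,
      Polynomial.coe_mul, Polynomial.coe_one, Polynomial.coe_C, Polynomial.coe_X,
      Polynomial.coe_pow] using this
  have hPG : (∏ i : Fin (n - 1), (1 - PowerSeries.C (ζ i) * PowerSeries.X))
      * ∏ i : Fin (n - 1), PowerSeries.mk (fun s => ζ i ^ s) = 1 := by
    rw [← Finset.prod_mul_distrib]
    simp [aux_geom]
  have hFG : ∏ i : Fin (n - 1), (1 + PowerSeries.C (ζ i) * PowerSeries.X)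
      = (1 - PowerSeries.C a * PowerSeries.X ^ (2 * n - 2))
        * ∏ i : Fin (n - 1), PowerSeries.mk (fun s => ζ i ^ s) := by
    calc ∏ i : Fin (n - 1), (1 + PowerSeries.C (ζ i) * PowerSeries.X)
        = (∏ i : Fin (n - 1), (1 + PowerSeries.C (ζ i) * PowerSeries.X))
          * ((∏ i : Fin (n - 1), (1 - PowerSeries.C (ζ i) * PowerSeries.X))
            * ∏ i : Fin (n - 1), PowerSeries.mk (fun s => ζ i ^ s)) := by
          rw [hPG, mul_one]
      _ = (∏ i : Fin (n - 1),
            ((1 - PowerSeries.C (ζ i) * PowerSeries.X)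
              * (1 + PowerSeries.C (ζ i) * PowerSeries.X)))
          * ∏ i : Fin (n - 1), PowerSeries.mk (fun s => ζ i ^ s) := by
          rw [Finset.prod_mul_distrib]; ring
      _ = _ := by rw [hcast]
  intro r hr
  rw [← aux_esymm_coeff, ← aux_hsymm_coeff, hFG, sub_mul, one_mul, map_sub]
  have hzero : PowerSeries.coeff r ((PowerSeries.C a * PowerSeries.X ^ (2 * n - 2))
      * ∏ i : Fin (n - 1), PowerSeries.mk (fun s => ζ i ^ s)) = 0 := by
    rw [show (PowerSeries.C a * PowerSeries.X ^ (2 * n - 2))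
        * ∏ i : Fin (n - 1), PowerSeries.mk (fun s => ζ i ^ s)
      = (PowerSeries.C a * ∏ i : Fin (n - 1), PowerSeries.mk (fun s => ζ i ^ s))
        * PowerSeries.X ^ (2 * n - 2) by ring]
    rw [PowerSeries.coeff_mul_X_pow']
    rw [if_neg (by omega)]
  rw [hzero, sub_zero]
end

section
/- Let N ≥ 2 and let z_1,…,z_m be complex numbers such that e_r(z) = h_r(z) for every 1 ≤ r < N, where e_r and h_r are the elementary and complete homogeneous symmetric polynomials in m variables (e_r = 0 for r > m). For integers k ≥ 1 and j ≥ 0 define S(k,j) := Σ_{ℓ=0}^{j} (−1)^ℓ h_{k+ℓ}(z)·e_{j−ℓ}(z), which is the value of the hook Schur function s_{(k,1^j)} at z. Then S(k,j) = S(j+1,k−1) for all k ≥ 1, j ≥ 0 with j + k < N. -/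
/-- The value of the `r`-th elementary symmetric polynomial at `z : Fin m → ℂ`
(zero for `r > m`). -/
noncomputable def eVal (m : ℕ) (z : Fin m → ℂ) (r : ℕ) : ℂ :=
  MvPolynomial.eval z (MvPolynomial.esymm (Fin m) ℂ r)

/-- The value of the `r`-th complete homogeneous symmetric polynomial at `z : Fin m → ℂ`. -/
noncomputable def hVal (m : ℕ) (z : Fin m → ℂ) (r : ℕ) : ℂ :=
  MvPolynomial.eval z (MvPolynomial.hsymm (Fin m) ℂ r)

/-- The value `S(k,j) = Σ_{ℓ=0}^{j} (-1)^ℓ h_{k+ℓ}(z) e_{j-ℓ}(z)` of the hook Schur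
function `s_{(k,1^j)}` at `z`. -/
noncomputable def hookVal (m : ℕ) (z : Fin m → ℂ) (k j : ℕ) : ℂ :=
  ∑ ℓ ∈ Finset.range (j + 1), (-1 : ℂ) ^ ℓ * hVal m z (k + ℓ) * eVal m z (j - ℓ)

open Finset MvPolynomial

/-- Sum over all multisets of size `n` of products of `f`. -/
noncomputable def HH (α : Type) [Fintype α] [DecidableEq α] (f : α → ℂ) (n : ℕ) : ℂ :=
  ∑ s : Sym α n, ((s : Multiset α).map f).prod

lemma hVal_eq_HH (m : ℕ) (z : Fin m → ℂ) (n : ℕ) : hVal m z n = HH (Fin m) z n := by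
  simp only [hVal, MvPolynomial.hsymm, map_sum, HH]
  refine Finset.sum_congr rfl fun s _ => ?_
  rw [map_multiset_prod, Multiset.map_map]
  simp [Function.comp]

lemma HH_zero (α : Type) [Fintype α] [DecidableEq α] (f : α → ℂ) : HH α f 0 = 1 := by
  rw [HH, Fintype.sum_unique, Sym.eq_nil_of_card_zero (default : Sym α 0)]
  simp

lemma hVal_zero (m : ℕ) (z : Fin m → ℂ) : hVal m z 0 = 1 := by simp [hVal]

lemma eVal_zero (m : ℕ) (z : Fin m → ℂ) : eVal m z 0 = 1 := by simp [eVal]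

lemma hVal_fin_zero (z : Fin 0 → ℂ) (r : ℕ) : hVal 0 z (r + 1) = 0 := by
  rw [hVal_eq_HH, HH]
  have : IsEmpty (Sym (Fin 0) (r + 1)) := by
    constructor
    intro s
    have hc : Multiset.card (s : Multiset (Fin 0)) = r + 1 := s.2
    obtain ⟨a, -⟩ := Multiset.exists_mem_of_ne_zero
      (fun h => by simp [h] at hc : (s : Multiset (Fin 0)) ≠ 0)
    exact a.elim0
  simp

lemma eVal_eq_esymm (m : ℕ) (z : Fin m → ℂ) (r : ℕ) :
    eVal m z r = ((Finset.univ : Finset (Fin m)).val.map z).esymm r := by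
  rw [eVal, MvPolynomial.esymm, map_sum, Finset.esymm_map_val]
  exact Finset.sum_congr rfl fun t _ => by rw [map_prod]; simp

lemma eVal_fin_zero (z : Fin 0 → ℂ) (r : ℕ) : eVal 0 z (r + 1) = 0 := by
  rw [eVal_eq_esymm]
  simp [Multiset.esymm, Multiset.powersetCard_zero_right]

lemma esymm_cons (a : ℂ) (M : Multiset ℂ) (r : ℕ) :
    (a ::ₘ M).esymm (r + 1) = M.esymm (r + 1) + a * M.esymm r := by
  simp only [Multiset.esymm, Multiset.powersetCard_cons, Multiset.map_add, Multiset.sum_add,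
    Multiset.map_map]
  congr 1
  simp [Function.comp_def, Multiset.prod_cons]
  rw [← Multiset.sum_map_mul_left]

lemma univ_val_succ (m : ℕ) (z : Fin (m + 1) → ℂ) :
    (Finset.univ : Finset (Fin (m + 1))).val.map z
      = z (Fin.last m) ::ₘ (Finset.univ : Finset (Fin m)).val.map (z ∘ Fin.castSucc) := by
  rw [Fin.univ_castSuccEmb, Finset.cons_val, Multiset.map_cons, Finset.map_val]
  rw [Multiset.map_map]
  rfl

lemma eRec (m : ℕ) (z : Fin (m + 1) → ℂ) (r : ℕ) :
    eVal (m + 1) z (r + 1)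
      = eVal m (z ∘ Fin.castSucc) (r + 1) + z (Fin.last m) * eVal m (z ∘ Fin.castSucc) r := by
  rw [eVal_eq_esymm, eVal_eq_esymm, eVal_eq_esymm, univ_val_succ, esymm_cons]

lemma HH_equiv {α β : Type} [Fintype α] [DecidableEq α] [Fintype β] [DecidableEq β]
    (e : α ≃ β) (f : β → ℂ) (n : ℕ) : HH β f n = HH α (f ∘ e) n := by
  rw [HH, HH]
  refine (Fintype.sum_equiv (Sym.equivCongr e) _ _ fun s => ?_).symm
  simp [Sym.equivCongr, Multiset.map_map]

lemma HH_option (α : Type) [Fintype α] [DecidableEq α] (g : Option α → ℂ) (n : ℕ) :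
    HH (Option α) g (n + 1) = HH α (g ∘ some) (n + 1) + g none * HH (Option α) g n := by
  rw [HH, ← Equiv.sum_comp (symOptionSuccEquiv (α := α)).symm
      (fun s : Sym (Option α) (n + 1) => ((s : Multiset (Option α)).map g).prod),
    Fintype.sum_sum_type]
  have h1 : ∀ s : Sym (Option α) n,
      (((symOptionSuccEquiv (α := α)).symm (Sum.inl s) : Multiset (Option α)).map g).prod
        = g none * ((s : Multiset (Option α)).map g).prod := by
    intro s
    show (((none ::ₛ s : Sym (Option α) (n+1)) : Multiset (Option α)).map g).prod = _
    rw [Sym.coe_cons, Multiset.map_cons, Multiset.prod_cons]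
  have h2 : ∀ s : Sym α (n+1),
      (((symOptionSuccEquiv (α := α)).symm (Sum.inr s) : Multiset (Option α)).map g).prod
        = ((s : Multiset α).map (g ∘ some)).prod := by
    intro s
    show (((s.map _ : Sym (Option α) (n+1)) : Multiset (Option α)).map g).prod = _
    rw [Sym.coe_map, Multiset.map_map]
    rfl
  rw [Finset.sum_congr rfl fun s _ => h1 s, Finset.sum_congr rfl fun s _ => h2 s,
    ← Finset.mul_sum, HH, HH]
  ring

lemma hRec (m : ℕ) (z : Fin (m + 1) → ℂ) (n : ℕ) :
    hVal (m + 1) z (n + 1)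
      = hVal m (z ∘ Fin.castSucc) (n + 1) + z (Fin.last m) * hVal (m + 1) z n := by
  have key : ∀ r : ℕ, hVal (m + 1) z r
      = HH (Option (Fin m)) (fun o => o.elim (z (Fin.last m)) (z ∘ Fin.castSucc)) r := by
    intro r
    rw [hVal_eq_HH, HH_equiv (finSuccEquivLast (n := m))]
    congr 1
    funext i
    induction i using Fin.lastCases with
    | last => simp [finSuccEquivLast_last]
    | cast i => simp [finSuccEquivLast_castSucc]
  rw [key, key, hVal_eq_HH, HH_option]
  rfl

lemma keyIdentity (m : ℕ) (z : Fin m → ℂ) :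
    ∀ n : ℕ, 1 ≤ n →
      ∑ a ∈ Finset.range (n + 1), (-1 : ℂ) ^ a * eVal m z a * hVal m z (n - a) = 0 := by
  induction m with
  | zero =>
    intro n hn
    apply Finset.sum_eq_zero
    intro a _
    match a with
    | 0 =>
      obtain ⟨n', rfl⟩ : ∃ n', n = n' + 1 := ⟨n - 1, by omega⟩
      simp [hVal_fin_zero]
    | a + 1 => simp [eVal_fin_zero]
  | succ m ih =>
    intro n hn
    obtain ⟨n', rfl⟩ : ∃ n', n = n' + 1 := ⟨n - 1, by omega⟩
    set z' : Fin m → ℂ := z ∘ Fin.castSucc with hz'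
    set t : ℂ := z (Fin.last m) with ht
    set A : ℂ := ∑ a ∈ Finset.range (n' + 1),
      (-1 : ℂ) ^ a * eVal m z' (a + 1) * hVal (m + 1) z (n' - a) with hA
    set B : ℂ := ∑ a ∈ Finset.range (n' + 1),
      (-1 : ℂ) ^ a * eVal m z' a * hVal (m + 1) z (n' - a) with hB
    have step1 : ∑ a ∈ Finset.range (n' + 1 + 1),
        (-1 : ℂ) ^ a * eVal (m + 1) z a * hVal (m + 1) z (n' + 1 - a)
        = -A - t * B + hVal (m + 1) z (n' + 1) := by
      rw [Finset.sum_range_succ']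
      have : ∀ a ∈ Finset.range (n' + 1),
          (-1 : ℂ) ^ (a + 1) * eVal (m + 1) z (a + 1) * hVal (m + 1) z (n' + 1 - (a + 1))
            = -((-1 : ℂ) ^ a * eVal m z' (a + 1) * hVal (m + 1) z (n' - a))
              - t * ((-1 : ℂ) ^ a * eVal m z' a * hVal (m + 1) z (n' - a)) := by
        intro a _
        have h1 : n' + 1 - (a + 1) = n' - a := by omega
        rw [h1, eRec, pow_succ]
        ring
      rw [Finset.sum_congr rfl this, Finset.sum_sub_distrib, Finset.sum_neg_distrib,
        ← Finset.mul_sum, ← hA, ← hB, eVal_zero, Nat.sub_zero]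
      ring
    have step2 : -A + hVal (m + 1) z (n' + 1)
        = (∑ a ∈ Finset.range (n' + 1 + 1),
            (-1 : ℂ) ^ a * eVal m z' a * hVal m z' (n' + 1 - a)) + t * B := by
      have expand : ∑ a ∈ Finset.range (n' + 1 + 1),
          (-1 : ℂ) ^ a * eVal m z' a * hVal (m + 1) z (n' + 1 - a)
          = -A + hVal (m + 1) z (n' + 1) := by
        rw [Finset.sum_range_succ']
        have : ∀ a ∈ Finset.range (n' + 1),
            (-1 : ℂ) ^ (a + 1) * eVal m z' (a + 1) * hVal (m + 1) z (n' + 1 - (a + 1))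
              = -((-1 : ℂ) ^ a * eVal m z' (a + 1) * hVal (m + 1) z (n' - a)) := by
          intro a _
          have h1 : n' + 1 - (a + 1) = n' - a := by omega
          rw [h1, pow_succ]
          ring
        rw [Finset.sum_congr rfl this, Finset.sum_neg_distrib, ← hA, eVal_zero, Nat.sub_zero]
        ring
      rw [← expand, Finset.sum_range_succ, Finset.sum_range_succ
        (fun a => (-1 : ℂ) ^ a * eVal m z' a * hVal m z' (n' + 1 - a))]
      have hsplit : ∀ a ∈ Finset.range (n' + 1),
          (-1 : ℂ) ^ a * eVal m z' a * hVal (m + 1) z (n' + 1 - a)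
            = (-1 : ℂ) ^ a * eVal m z' a * hVal m z' (n' + 1 - a)
              + t * ((-1 : ℂ) ^ a * eVal m z' a * hVal (m + 1) z (n' - a)) := by
        intro a ha
        rw [Finset.mem_range] at ha
        have h1 : n' + 1 - a = (n' - a) + 1 := by omega
        rw [h1, hRec]
        ring
      rw [Finset.sum_congr rfl hsplit, Finset.sum_add_distrib, ← Finset.mul_sum, ← hB]
      simp only [Nat.add_sub_cancel_left, Nat.sub_self]
      rw [hVal_zero, hVal_zero]
      ring
    rw [step1]
    have := ih z' (n' + 1) (by omega)
    rw [show -A - t * B + hVal (m + 1) z (n' + 1) = (-A + hVal (m + 1) z (n' + 1)) - t * B by ring,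
      step2, this]
    ring

/-- if `e_r(z) = h_r(z)` for all `1 ≤ r < N`, then the hook Schur values
satisfy the symmetry `S(k,j) = S(j+1,k-1)` whenever `j + k < N`. -/
theorem statement8 (N m : ℕ) (hN : 2 ≤ N) (z : Fin m → ℂ)
    (heh : ∀ r : ℕ, 1 ≤ r → r < N → eVal m z r = hVal m z r) :
    ∀ k j : ℕ, 1 ≤ k → j + k < N → hookVal m z k j = hookVal m z (j + 1) (k - 1) := by
  intro k j hk hjk
  set n : ℕ := j + k with hn
  have hF : ∑ a ∈ Finset.range (n + 1), (-1 : ℂ) ^ a * eVal m z a * hVal m z (n - a) = 0 :=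
    keyIdentity m z n (by omega)
  -- split the sum at j+1
  have hsplit : ∑ a ∈ Finset.range (n + 1), (-1 : ℂ) ^ a * eVal m z a * hVal m z (n - a)
      = (∑ a ∈ Finset.range (j + 1), (-1 : ℂ) ^ a * eVal m z a * hVal m z (n - a))
        + ∑ b ∈ Finset.range k, (-1 : ℂ) ^ (j + 1 + b) * eVal m z (j + 1 + b)
            * hVal m z (n - (j + 1 + b)) := by
    have h1 : n + 1 = (j + 1) + k := by omega
    rw [h1, Finset.sum_range_add]
  -- first part equals (-1)^j * hookVal m z k j
  have hpart1 : ∑ a ∈ Finset.range (j + 1), (-1 : ℂ) ^ a * eVal m z a * hVal m z (n - a)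
      = (-1 : ℂ) ^ j * hookVal m z k j := by
    rw [← Finset.sum_range_reflect]
    rw [hookVal, Finset.mul_sum]
    refine Finset.sum_congr rfl fun ℓ hℓ => ?_
    rw [Finset.mem_range] at hℓ
    have h1 : j + 1 - 1 - ℓ = j - ℓ := by omega
    have h2 : n - (j - ℓ) = k + ℓ := by omega
    have h3 : (-1 : ℂ) ^ (j - ℓ) = (-1 : ℂ) ^ j * (-1 : ℂ) ^ ℓ := by
      rw [← pow_add]
      have h4 : j + ℓ = (j - ℓ) + 2 * ℓ := by omega
      rw [h4, pow_add, pow_mul]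
      norm_num
    rw [h1, h2, h3]
    ring
  -- second part equals (-1)^(j+1) * hookVal m z (j+1) (k-1)
  have hpart2 : ∑ b ∈ Finset.range k, (-1 : ℂ) ^ (j + 1 + b) * eVal m z (j + 1 + b)
        * hVal m z (n - (j + 1 + b))
      = (-1 : ℂ) ^ (j + 1) * hookVal m z (j + 1) (k - 1) := by
    rw [hookVal, Finset.mul_sum]
    have hk1 : k - 1 + 1 = k := by omega
    rw [hk1]
    refine Finset.sum_congr rfl fun b hb => ?_
    rw [Finset.mem_range] at hb
    have hE : eVal m z (j + 1 + b) = hVal m z (j + 1 + b) :=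
      heh _ (by omega) (by omega)
    have hn2 : n - (j + 1 + b) = k - 1 - b := by omega
    have hHE : hVal m z (k - 1 - b) = eVal m z (k - 1 - b) := by
      rcases Nat.eq_zero_or_pos (k - 1 - b) with h | h
      · rw [h, hVal_zero, eVal_zero]
      · exact (heh _ h (by omega)).symm
    have hsign : (-1 : ℂ) ^ (j + 1 + b) = (-1 : ℂ) ^ (j + 1) * (-1 : ℂ) ^ b := by
      rw [pow_add]
    rw [hn2, hE, hHE, hsign, show j + 1 + b = j + 1 + b from rfl]
    ring
  rw [hsplit, hpart1, hpart2] at hF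
  have hne : (-1 : ℂ) ^ j ≠ 0 := by
    apply pow_ne_zero; norm_num
  have : (-1 : ℂ) ^ (j + 1) = -((-1 : ℂ) ^ j) := by rw [pow_succ]; ring
  rw [this] at hF
  have hF2 : (-1 : ℂ) ^ j * (hookVal m z k j - hookVal m z (j + 1) (k - 1)) = 0 := by
    rw [mul_sub]; linear_combination hF
  rcases mul_eq_zero.mp hF2 with h | h
  · exact absurd h hne
  · exact sub_eq_zero.mp h
end

section
/- Let u : ℕ → ℂ be a sequence satisfying u_1 = 5·u_0 and the Apery recurrence n³u_n − (34n³−51n²+27n−5)u_{n−1} + (n−1)³u_{n−2} = 0 for all n ≥ 2. Let U(t) := Σ_{n≥0} u_n t^n ∈ ℂ[[t]] be its generating formal power series. Then L(U) = 0, where L is the ℂ-linear operator on ℂ[[t]] given by L := D³ − T∘(2D+1)(17D²+17D+5) + T²∘(D+1)³, with D(f) = t·f′ the Euler operator and T multiplication by t. -/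
/-- The Euler operator `D = t d/dt` on formal power series `ℂ[[t]]`. -/
noncomputable def Dps : Module.End ℂ (PowerSeries ℂ) :=
  (LinearMap.mulLeft ℂ (PowerSeries.X : PowerSeries ℂ)) ∘ₗ
    (PowerSeries.derivative ℂ).toLinearMap

/-- The operator of multiplication by `t` on `ℂ[[t]]`. -/
noncomputable def Tps : Module.End ℂ (PowerSeries ℂ) :=
  LinearMap.mulLeft ℂ (PowerSeries.X : PowerSeries ℂ)

/-- The Apery operator `L = D³ - T(2D+1)(17D²+17D+5) + T²(D+1)³` on `ℂ[[t]]`. -/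
noncomputable def AperyOp : Module.End ℂ (PowerSeries ℂ) :=
  Dps ^ 3 - Tps * ((2 * Dps + 1) * (17 * Dps ^ 2 + 17 * Dps + 5)) + Tps ^ 2 * (Dps + 1) ^ 3

lemma coeff_Dps (f : PowerSeries ℂ) (n : ℕ) :
    PowerSeries.coeff n (Dps f) = n * PowerSeries.coeff n f := by
  cases n with
  | zero => simp [Dps, PowerSeries.coeff_zero_X_mul]
  | succ m =>
    simp [Dps, PowerSeries.coeff_succ_X_mul, PowerSeries.coeff_derivative]
    ring

lemma coeff_mul_num (g : PowerSeries ℂ) (n : ℕ) (k : ℕ) [k.AtLeastTwo] :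
    PowerSeries.coeff n (g * (OfNat.ofNat k : PowerSeries ℂ))
      = PowerSeries.coeff n g * OfNat.ofNat k := by
  rw [← map_ofNat (PowerSeries.C (R := ℂ)) k, PowerSeries.coeff_mul_C]

lemma coeff_nsmul (g : PowerSeries ℂ) (n k : ℕ) :
    PowerSeries.coeff n (k • g) = k * PowerSeries.coeff n g := by
  rw [map_nsmul, nsmul_eq_mul]

lemma coeff_P1 (f : PowerSeries ℂ) (n : ℕ) :
    PowerSeries.coeff n
        (((2 * Dps + 1) * (17 * Dps ^ 2 + 17 * Dps + 5) : Module.End ℂ (PowerSeries ℂ)) f)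
      = (2 * n + 1) * (17 * (n : ℂ) ^ 2 + 17 * n + 5) * PowerSeries.coeff n f := by
  simp only [Module.End.mul_apply, LinearMap.add_apply, Module.End.one_apply, pow_two,
    Module.End.ofNat_apply, Module.End.natCast_apply, map_add, coeff_nsmul, coeff_Dps]
  push_cast
  ring

lemma coeff_P2 (f : PowerSeries ℂ) (n : ℕ) :
    PowerSeries.coeff n (((Dps + 1) ^ 3 : Module.End ℂ (PowerSeries ℂ)) f)
      = ((n : ℂ) + 1) ^ 3 * PowerSeries.coeff n f := by
  simp only [pow_succ, pow_zero, one_mul, Module.End.mul_apply, LinearMap.add_apply,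
    Module.End.one_apply, map_add, coeff_Dps]
  ring

lemma coeff_Tps_zero (f : PowerSeries ℂ) :
    PowerSeries.coeff 0 (Tps f) = 0 := by
  simp [Tps, PowerSeries.coeff_zero_X_mul]

lemma coeff_Tps_succ (f : PowerSeries ℂ) (n : ℕ) :
    PowerSeries.coeff (n + 1) (Tps f) = PowerSeries.coeff n f := by
  simp [Tps, PowerSeries.coeff_succ_X_mul]

lemma AperyOp_apply (f : PowerSeries ℂ) :
    AperyOp f = Dps (Dps (Dps f))
      - Tps (((2 * Dps + 1) * (17 * Dps ^ 2 + 17 * Dps + 5) : Module.End ℂ (PowerSeries ℂ)) f)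
      + Tps (Tps (((Dps + 1) ^ 3 : Module.End ℂ (PowerSeries ℂ)) f)) := rfl

/-- if `u : ℕ → ℂ` satisfies `u₁ = 5 u₀` and the Apery recurrence
`n³uₙ - (34n³-51n²+27n-5)u_{n-1} + (n-1)³u_{n-2} = 0` for `n ≥ 2`, then the Apery
operator `L` annihilates the generating series `U(t) = Σ uₙ tⁿ`. -/
theorem statement13 (u : ℕ → ℂ) (h1 : u 1 = 5 * u 0)
    (hrec : ∀ n : ℕ, 2 ≤ n →
      (n : ℂ) ^ 3 * u n
        - (34 * (n : ℂ) ^ 3 - 51 * (n : ℂ) ^ 2 + 27 * (n : ℂ) - 5) * u (n - 1)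
        + ((n : ℂ) - 1) ^ 3 * u (n - 2) = 0) :
    AperyOp (PowerSeries.mk u) = 0 := by
  ext n
  rw [AperyOp_apply, map_add, map_sub, map_zero]
  match n with
  | 0 =>
    rw [coeff_Dps, coeff_Dps, coeff_Dps, coeff_Tps_zero, coeff_Tps_zero]
    simp
  | 1 =>
    rw [coeff_Dps, coeff_Dps, coeff_Dps, coeff_Tps_succ, coeff_P1,
      show PowerSeries.coeff (R := ℂ) 1 = PowerSeries.coeff (0 + 1) from rfl, coeff_Tps_succ, coeff_Tps_zero,
      PowerSeries.coeff_mk, PowerSeries.coeff_mk]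
    rw [h1]
    push_cast
    ring
  | (m + 2) =>
    rw [coeff_Dps, coeff_Dps, coeff_Dps,
      show m + 2 = (m + 1) + 1 from rfl, coeff_Tps_succ, coeff_P1,
      show m + 1 + 1 = (m + 1) + 1 from rfl, coeff_Tps_succ, coeff_Tps_succ, coeff_P2,
      PowerSeries.coeff_mk, PowerSeries.coeff_mk, PowerSeries.coeff_mk]
    have e : m + 1 + 1 = m + 2 := rfl
    rw [e]
    have h := hrec (m + 2) (by omega)
    have h2 : (m : ℕ) + 2 - 1 = m + 1 := by omega
    rw [Nat.add_sub_cancel, h2] at h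
    push_cast at h ⊢
    linear_combination h
end

section
/- Define a_n := Σ_{k=0}^{n} binom(n,k)²·binom(n+k,k)² for n ∈ ℕ. Then a_0 = 1, a_1 = 5, and for every n ≥ 2: n³·a_n − (34n³−51n²+27n−5)·a_{n−1} + (n−1)³·a_{n−2} = 0. -/
/-- The Apery numbers `a_n = Σ_{k=0}^n binom(n,k)² binom(n+k,k)²`. -/
def aperyA (n : ℕ) : ℤ :=
  ∑ k ∈ Finset.range (n + 1), ((n.choose k : ℤ)) ^ 2 * (((n + k).choose k : ℤ)) ^ 2

namespace AperyAux

/-- The summand. -/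
def F (n k : ℕ) : ℤ := ((n.choose k : ℤ)) ^ 2 * (((n + k).choose k : ℤ)) ^ 2

/-- The telescoping certificate. -/
def G (m : ℕ) : ℕ → ℤ
  | 0 => 0
  | (j+1) => 4 * (2*(m:ℤ)+3) * ((j:ℤ)*(2*(j:ℤ)+1) - (2*(m:ℤ)+3)^2) * F (m+1) j

lemma Rz (n k : ℕ) :
    (((n+1).choose k : ℚ)) * ((n:ℚ) + 1 - (k:ℚ)) = ((n.choose k : ℚ)) * ((n:ℚ) + 1) := by
  rcases le_or_gt k (n+1) with h | h
  · have h1 := Nat.choose_mul_succ_eq n k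
    have h2 : ((n.choose k * (n+1) : ℕ) : ℚ) = (((n+1).choose k * (n + 1 - k) : ℕ) : ℚ) := by
      exact_mod_cast congrArg (Nat.cast : ℕ → ℚ) h1
    push_cast [h] at h2
    linarith
  · have h1 : n.choose k = 0 := Nat.choose_eq_zero_of_lt (by omega)
    have h2 : (n+1).choose k = 0 := Nat.choose_eq_zero_of_lt (by omega)
    simp [h1, h2]

lemma Sz (n k : ℕ) :
    ((n.choose (k+1) : ℚ)) * ((k:ℚ) + 1) = ((n.choose k : ℚ)) * ((n:ℚ) - (k:ℚ)) := by
  rcases le_or_gt k n with h | h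
  · have h1 := Nat.choose_succ_right_eq n k
    have h2 : ((n.choose (k+1) * (k+1) : ℕ) : ℚ) = ((n.choose k * (n - k) : ℕ) : ℚ) := by
      exact_mod_cast congrArg (Nat.cast : ℕ → ℚ) h1
    push_cast [h] at h2
    linarith
  · have h1 : n.choose k = 0 := Nat.choose_eq_zero_of_lt (by omega)
    have h2 : n.choose (k+1) = 0 := Nat.choose_eq_zero_of_lt (by omega)
    simp [h1, h2]

lemma keyQ (m j : ℕ) (hj : j ≠ m + 1) :
    ((m:ℚ)+2)^3 * (((m+2).choose (j+1) : ℚ))^2 * (((m+j+3).choose (j+1) : ℚ))^2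
      - (34*((m:ℚ)+2)^3 - 51*((m:ℚ)+2)^2 + 27*((m:ℚ)+2) - 5) *
        (((m+1).choose (j+1) : ℚ))^2 * (((m+j+2).choose (j+1) : ℚ))^2
      + ((m:ℚ)+1)^3 * ((m.choose (j+1) : ℚ))^2 * (((m+j+1).choose (j+1) : ℚ))^2
    = 4*(2*(m:ℚ)+3)*(((j:ℚ)+1)*(2*((j:ℚ)+1)+1) - (2*(m:ℚ)+3)^2) *
        (((m+1).choose (j+1) : ℚ))^2 * (((m+j+2).choose (j+1) : ℚ))^2
      - 4*(2*(m:ℚ)+3)*((j:ℚ)*(2*(j:ℚ)+1) - (2*(m:ℚ)+3)^2) *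
        (((m+1).choose j : ℚ))^2 * (((m+j+1).choose j : ℚ))^2 := by
  have hj' : ((m:ℚ) + 1) - (j:ℚ) ≠ 0 := by
    intro h
    apply hj
    have : (j:ℚ) = ((m+1 : ℕ) : ℚ) := by push_cast; linarith
    exact_mod_cast this
  have hJ1 : ((j:ℚ) + 1) ≠ 0 := by positivity
  have hN1 : ((m:ℚ) + 1) ≠ 0 := by positivity
  have hN2 : ((m:ℚ) + 2) ≠ 0 := by positivity
  have hNJ2 : ((m:ℚ) + (j:ℚ) + 2) ≠ 0 := by positivity
  -- relations between binomials
  have hc : (((m+1).choose (j+1) : ℚ)) = ((m+1).choose j : ℚ) * ((m:ℚ)+1-(j:ℚ)) / ((j:ℚ)+1) := by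
    rw [eq_div_iff hJ1]
    have := Sz (m+1) j; push_cast at this; linarith
  have hd : (((m+j+2).choose (j+1) : ℚ)) =
      ((m+j+1).choose j : ℚ) * ((m:ℚ)+(j:ℚ)+2) / ((j:ℚ)+1) := by
    rw [eq_div_iff hJ1]
    have h1 := Sz (m+j+2) j
    have h2 := Rz (m+j+1) j
    have e1 : m+j+1+1 = m+j+2 := by omega
    rw [e1] at h2
    push_cast at h1 h2
    have : (((m+j+2).choose (j+1) : ℚ)) * ((j:ℚ)+1) * ((m:ℚ)+2)
        = ((m+j+1).choose j : ℚ) * ((m:ℚ)+(j:ℚ)+2) * ((m:ℚ)+2) := by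
      nlinarith [h1, h2]
    exact mul_right_cancel₀ hN2 this
  have hu : (((m+2).choose (j+1) : ℚ)) =
      ((m+1).choose (j+1) : ℚ) * ((m:ℚ)+2) / ((m:ℚ)+1-(j:ℚ)) := by
    rw [eq_div_iff hj']
    have := Rz (m+1) (j+1)
    have e1 : m+1+1 = m+2 := by omega
    rw [e1] at this
    push_cast at this; linarith
  have hv : (((m+j+3).choose (j+1) : ℚ)) =
      ((m+j+2).choose (j+1) : ℚ) * ((m:ℚ)+(j:ℚ)+3) / ((m:ℚ)+2) := by
    rw [eq_div_iff hN2]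
    have := Rz (m+j+2) (j+1)
    have e1 : m+j+2+1 = m+j+3 := by omega
    rw [e1] at this
    push_cast at this; linarith
  have hw : ((m.choose (j+1) : ℚ)) =
      ((m+1).choose (j+1) : ℚ) * ((m:ℚ)-(j:ℚ)) / ((m:ℚ)+1) := by
    rw [eq_div_iff hN1]
    have := Rz m (j+1)
    push_cast at this; linarith
  have hx : (((m+j+1).choose (j+1) : ℚ)) =
      ((m+j+2).choose (j+1) : ℚ) * ((m:ℚ)+1) / ((m:ℚ)+(j:ℚ)+2) := by
    rw [eq_div_iff hNJ2]
    have := Rz (m+j+1) (j+1)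
    have e1 : m+j+1+1 = m+j+2 := by omega
    rw [e1] at this
    push_cast at this; linarith
  rw [hu, hv, hw, hx, hc, hd]
  field_simp
  ring

lemma F_eq_zero {n k : ℕ} (h : n < k) : F n k = 0 := by
  simp [F, Nat.choose_eq_zero_of_lt h]

lemma key (m k : ℕ) :
    ((m:ℤ)+2)^3 * F (m+2) k
      - (34*((m:ℤ)+2)^3 - 51*((m:ℤ)+2)^2 + 27*((m:ℤ)+2) - 5) * F (m+1) k
      + ((m:ℤ)+1)^3 * F m k = G m (k+1) - G m k := by
  cases k with
  | zero =>
      simp only [F, G, Nat.choose_zero_right, Nat.add_zero, Nat.choose_self]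
      push_cast
      ring
  | succ j =>
      by_cases hj : j = m + 1
      · subst hj
        -- central binomial case: k = m+2
        have h0 : F (m+1) (m+2) = 0 := F_eq_zero (by omega)
        have h1 : F m (m+2) = 0 := F_eq_zero (by omega)
        have h2 : F (m+1) ((m+1)+1) = 0 := by exact_mod_cast h0
        simp only [G, h0, h1, h2]
        have hcb := Nat.succ_mul_centralBinom_succ (m+1)
        have hcb' : ((m:ℤ)+2) * (((2*(m+2)).choose (m+2) : ℤ)) =
            2 * (2*(m:ℤ)+3) * (((2*(m+1)).choose (m+1) : ℤ)) := by
          have := congrArg (Nat.cast : ℕ → ℤ) hcb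
          push_cast [Nat.centralBinom] at this ⊢
          convert this using 2 <;> push_cast <;> ring
        have e0 : m+1+1 = m+2 := by omega
        have e1 : m+2+(m+2) = 2*(m+2) := by omega
        have e2 : m+1+(m+1) = 2*(m+1) := by omega
        simp only [F, e0, e1, e2, Nat.choose_self]
        push_cast
        linear_combination (((m:ℤ)+2) * (((m:ℤ)+2) * (((2*(m+2)).choose (m+2) : ℤ))
          + 2*(2*(m:ℤ)+3) * (((2*(m+1)).choose (m+1) : ℤ)))) * hcb'
      · -- generic case via the rational identity
        have hQ := keyQ m j hj
        have e1 : m+2+(j+1) = m+j+3 := by omega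
        have e2 : m+1+(j+1) = m+j+2 := by omega
        have e3 : m+(j+1) = m+j+1 := by omega
        have e4 : m+1+j = m+j+1 := by omega
        simp only [F, G, e1, e2, e3, e4]
        have : (((((m:ℤ)+2)^3 * (((m+2).choose (j+1) : ℤ))^2 * (((m+j+3).choose (j+1) : ℤ))^2
            - (34*((m:ℤ)+2)^3 - 51*((m:ℤ)+2)^2 + 27*((m:ℤ)+2) - 5) *
              (((m+1).choose (j+1) : ℤ))^2 * (((m+j+2).choose (j+1) : ℤ))^2
            + ((m:ℤ)+1)^3 * ((m.choose (j+1) : ℤ))^2 * (((m+j+1).choose (j+1) : ℤ))^2) : ℤ) : ℚ)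
            = (((4*(2*(m:ℤ)+3)*(((j:ℤ)+1)*(2*((j:ℤ)+1)+1) - (2*(m:ℤ)+3)^2) *
              (((m+1).choose (j+1) : ℤ))^2 * (((m+j+2).choose (j+1) : ℤ))^2
            - 4*(2*(m:ℤ)+3)*((j:ℤ)*(2*(j:ℤ)+1) - (2*(m:ℤ)+3)^2) *
              (((m+1).choose j : ℤ))^2 * (((m+j+1).choose j : ℤ))^2) : ℤ) : ℚ) := by
          push_cast
          push_cast at hQ
          linarith
        have h2 := (Int.cast_injective (α := ℚ)) this
        push_cast at h2 ⊢
        linarith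
  
lemma aperyA_eq_sum (n N : ℕ) (h : n + 1 ≤ N) :
    aperyA n = ∑ k ∈ Finset.range N, F n k := by
  rw [aperyA]
  apply Finset.sum_subset
  · exact Finset.range_subset_range.mpr h
  · intro k _ hk
    have : n < k := by simp at hk; omega
    simp [Nat.choose_eq_zero_of_lt this]

lemma recurrence (m : ℕ) :
    ((m:ℤ)+2)^3 * aperyA (m+2)
      - (34*((m:ℤ)+2)^3 - 51*((m:ℤ)+2)^2 + 27*((m:ℤ)+2) - 5) * aperyA (m+1)
      + ((m:ℤ)+1)^3 * aperyA m = 0 := by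
  rw [aperyA_eq_sum (m+2) (m+3) (by omega), aperyA_eq_sum (m+1) (m+3) (by omega),
    aperyA_eq_sum m (m+3) (by omega)]
  rw [Finset.mul_sum, Finset.mul_sum, Finset.mul_sum, ← Finset.sum_sub_distrib,
    ← Finset.sum_add_distrib]
  have : ∀ k ∈ Finset.range (m+3),
      ((m:ℤ)+2)^3 * F (m+2) k
        - (34*((m:ℤ)+2)^3 - 51*((m:ℤ)+2)^2 + 27*((m:ℤ)+2) - 5) * F (m+1) k
        + ((m:ℤ)+1)^3 * F m k = G m (k+1) - G m k := fun k _ => key m k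
  rw [Finset.sum_congr rfl this, Finset.sum_range_sub (G m)]
  have h1 : G m (m+3) = 0 := by
    simp only [G]
    have : F (m+1) (m+2) = 0 := F_eq_zero (by omega)
    rw [this]; ring
  have h2 : G m 0 = 0 := rfl
  rw [h1, h2]; ring

end AperyAux

/-- the Apery numbers satisfy `a₀ = 1`, `a₁ = 5` and the Apery recurrence
`n³aₙ - (34n³-51n²+27n-5)a_{n-1} + (n-1)³a_{n-2} = 0` for all `n ≥ 2`. -/
theorem statement16 :
    aperyA 0 = 1 ∧ aperyA 1 = 5 ∧
    ∀ n : ℕ, 2 ≤ n →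
      (n : ℤ) ^ 3 * aperyA n
        - (34 * (n : ℤ) ^ 3 - 51 * (n : ℤ) ^ 2 + 27 * (n : ℤ) - 5) * aperyA (n - 1)
        + ((n : ℤ) - 1) ^ 3 * aperyA (n - 2) = 0 := by
  refine ⟨by decide, by decide, ?_⟩
  intro n hn
  obtain ⟨m, rfl⟩ : ∃ m, n = m + 2 := ⟨n - 2, by omega⟩
  have h1 : m + 2 - 1 = m + 1 := by omega
  have h2 : m + 2 - 2 = m := by omega
  rw [h1, h2]
  have := AperyAux.recurrence m
  push_cast
  push_cast at this
  linarith
end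

section
/- Let a be the real sequence defined by a_0 = 1, a_1 = 5 and the Apery recurrence n³a_n − (34n³−51n²+27n−5)a_{n−1} + (n−1)³a_{n−2} = 0 for n ≥ 2. Then a_n = O(α^n) where α = 17 + 12√2 is the greater root of the polynomial x² − 34x + 1; that is, there exists a constant C > 0 such that a_n ≤ C·(17+12√2)^n for all n ≥ 0. -/
set_option maxHeartbeats 1000000 in
/-- the Apery sequence `a` with `a₀ = 1`, `a₁ = 5` satisfying the Apery
recurrence is `O(αⁿ)` for `α = 17 + 12√2` the greater root of `x² - 34x + 1`:
there is `C > 0` with `aₙ ≤ C αⁿ` for all `n`. -/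
theorem statement19 (a : ℕ → ℝ) (ha0 : a 0 = 1) (ha1 : a 1 = 5)
    (hrec : ∀ n : ℕ, 2 ≤ n →
      (n : ℝ) ^ 3 * a n
        - (34 * (n : ℝ) ^ 3 - 51 * (n : ℝ) ^ 2 + 27 * (n : ℝ) - 5) * a (n - 1)
        + ((n : ℝ) - 1) ^ 3 * a (n - 2) = 0) :
    ∃ C : ℝ, 0 < C ∧ ∀ n : ℕ, a n ≤ C * (17 + 12 * Real.sqrt 2) ^ n := by
  obtain ⟨α, hαdef⟩ : ∃ x : ℝ, x = 17 + 12 * Real.sqrt 2 := ⟨_, rfl⟩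
  rw [show (17 + 12 * Real.sqrt 2 : ℝ) = α from hαdef.symm]
  have hs : Real.sqrt 2 ^ 2 = 2 := Real.sq_sqrt (by norm_num)
  have hs1 : (1:ℝ) ≤ Real.sqrt 2 := by
    nlinarith [Real.sqrt_nonneg 2]
  have hα5 : (5:ℝ) ≤ α := by rw [hαdef]; nlinarith
  have hα2 : α ^ 2 = 34 * α - 1 := by rw [hαdef]; nlinarith
  have key : ∀ n : ℕ, 0 < a n ∧ a n ≤ a (n + 1) ∧ a (n + 1) ≤ α * a n := by
    intro n
    induction n with
    | zero => refine ⟨by rw [ha0]; norm_num, by rw [ha0, ha1]; norm_num, ?_⟩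
              rw [ha0, ha1]; linarith
    | succ n ih =>
        obtain ⟨hpos, hmono, hratio⟩ := ih
        have hr := hrec (n + 2) (by omega)
        have h1 : (n + 2 : ℕ) - 1 = n + 1 := by omega
        have h2 : (n + 2 : ℕ) - 2 = n := by omega
        rw [h1, h2] at hr
        push_cast at hr
        set m : ℝ := (n : ℝ) with hm
        have hm0 : 0 ≤ m := Nat.cast_nonneg n
        have hpos1 : 0 < a (n + 1) := lt_of_lt_of_le hpos hmono
        have he : (m+2)^3 * a (n+2) =
            (34*(m+2)^3 - 51*(m+2)^2 + 27*(m+2) - 5) * a (n+1) - (m+1)^3 * a n := by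
          linear_combination hr
        have hc1 : (m+1)^3 ≤ 33*(m+2)^3 - 51*(m+2)^2 + 27*(m+2) - 5 := by
          nlinarith [sq_nonneg m, hm0, mul_nonneg (mul_nonneg hm0 hm0) hm0]
        have hc1' : (0:ℝ) ≤ 33*(m+2)^3 - 51*(m+2)^2 + 27*(m+2) - 5 :=
          le_trans (by positivity) hc1
        have hmono2 : a (n + 1) ≤ a (n + 2) := by
          have hA : (m+1)^3 * a n ≤ (33*(m+2)^3 - 51*(m+2)^2 + 27*(m+2) - 5) * a n :=
            mul_le_mul_of_nonneg_right hc1 hpos.le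
          have hB : (33*(m+2)^3 - 51*(m+2)^2 + 27*(m+2) - 5) * a n
              ≤ (33*(m+2)^3 - 51*(m+2)^2 + 27*(m+2) - 5) * a (n+1) :=
            mul_le_mul_of_nonneg_left hmono hc1'
          have hmul : (m+2)^3 * a (n+1) ≤ (m+2)^3 * a (n+2) := by
            nlinarith [he, hA, hB]
          exact le_of_mul_le_mul_left hmul (by positivity)
        refine ⟨hpos1, hmono2, ?_⟩
        -- a (n+2) ≤ α * a (n+1)
        have hαpos : (0:ℝ) < α := by linarith
        have hup : a (n + 1) ≤ α * a n := hratio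
        have h3 : (m+1)^3 * a (n+1) ≤ (m+1)^3 * (α * a n) :=
          mul_le_mul_of_nonneg_left hup (by positivity)
        have h4 : α * ((m+2)^3 * a (n+2)) ≤
            α * ((34*(m+2)^3 - 51*(m+2)^2 + 27*(m+2) - 5) * a (n+1))
              - (m+1)^3 * a (n+1) := by
          rw [he]; nlinarith [h3]
        have hq : (0:ℝ) ≤ 51*(m+2)^2 - 27*(m+2) + 5 := by nlinarith [sq_nonneg m]
        have hq5 : 5 * (51*(m+2)^2 - 27*(m+2) + 5) ≤ α * (51*(m+2)^2 - 27*(m+2) + 5) :=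
          mul_le_mul_of_nonneg_right hα5 hq
        have hcoef : α * (34*(m+2)^3 - 51*(m+2)^2 + 27*(m+2) - 5) - (m+1)^3
            ≤ α^2 * (m+2)^3 := by
          rw [hα2]
          linarith [hq5, sq_nonneg m, hm0]
        have h5 : α * ((m+2)^3 * a (n+2)) ≤ α^2 * (m+2)^3 * a (n+1) := by
          calc α * ((m+2)^3 * a (n+2))
              ≤ (α * (34*(m+2)^3 - 51*(m+2)^2 + 27*(m+2) - 5) - (m+1)^3) * a (n+1) := by
                linarith [h4]
            _ ≤ α^2 * (m+2)^3 * a (n+1) :=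
                mul_le_mul_of_nonneg_right hcoef hpos1.le
        have hden : (0:ℝ) < α * (m+2)^3 := by positivity
        have hmul : (α * (m+2)^3) * a (n + 2) ≤ (α * (m+2)^3) * (α * a (n+1)) := by
          nlinarith [h5]
        exact le_of_mul_le_mul_left hmul hden
  refine ⟨5, by norm_num, ?_⟩
  intro n
  induction n with
  | zero => rw [ha0]; norm_num
  | succ n ih =>
      have h := (key n).2.2
      have hαpos : (0:ℝ) < α := by linarith
      calc a (n + 1) ≤ α * a n := h
        _ ≤ α * (5 * α ^ n) := by
            exact mul_le_mul_of_nonneg_left ih (le_of_lt hαpos)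
        _ = 5 * α ^ (n + 1) := by ring
end
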